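/- arXiv:1705.07021 — 6 statements merged into one kernel-verified Lean document; each statement's English description precedes it below -/
import Mathlib

section
/- The system (X_η, S) is coalescent: every continuous map U : X_η → X_η satisfying U ∘ S = S ∘ U is a homeomorphism. -/
open scoped BigOperators

-- The (Boolean) indicator function of the `\mathscr{B}`-free integers for
--`\mathscr{B} = {2^i b_i : i \ge 1}`. 
open Classical in
noncomputable def etaB (b : ℕ → ℕ) : ℤ → Bool := fun n =>
  if (∀ i : ℕ, 1 ≤ i → ¬ ((2 : ℤ) ^ i * (b i : ℤ) ∣ n)) then true else false

-- The orbit closure `X_η` of `η` under the left shift, in the product topology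
--on `{0,1}^ℤ`. 
def Xeta (b : ℕ → ℕ) : Set (ℤ → Bool) :=
  closure {y : ℤ → Bool | ∃ n : ℤ, y = fun m => etaB b (m + n)}

namespace Coal

structure Hyp (b : ℕ → ℕ) : Prop where
  hodd : ∀ i : ℕ, 1 ≤ i → Odd (b i)
  hgt : ∀ i : ℕ, 1 ≤ i → 1 < b i
  hcop : ∀ i j : ℕ, 1 ≤ i → 1 ≤ j → i ≠ j → Nat.Coprime (b i) (b j)

variable {b : ℕ → ℕ}

def MM (b : ℕ → ℕ) (i : ℕ) : ℤ := 2 ^ i * (b i : ℤ)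

lemma Hyp.b3 (H : Hyp b) {i : ℕ} (hi : 1 ≤ i) : (3:ℤ) ≤ (b i : ℤ) := by
  have h1 := H.hgt i hi
  have h2 := H.hodd i hi
  rcases h2 with ⟨k, hk⟩
  omega

lemma Hyp.MMpos (H : Hyp b) {i : ℕ} (hi : 1 ≤ i) : 0 < MM b i := by
  have := H.b3 hi
  have h2 : (0:ℤ) < 2 ^ i := by positivity
  unfold MM; nlinarith

lemma Hyp.cop2 (H : Hyp b) {i : ℕ} (hi : 1 ≤ i) (k : ℕ) :
    IsCoprime ((2:ℤ)^k) ((b i : ℤ)) := by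
  apply IsCoprime.pow_left
  rcases H.hodd i hi with ⟨m, hm⟩
  exact ⟨-(m:ℤ), 1, by push_cast [hm]; ring⟩

lemma Hyp.copbb (H : Hyp b) {i j : ℕ} (hi : 1 ≤ i) (hj : 1 ≤ j) (hij : i ≠ j) :
    IsCoprime ((b i):ℤ) ((b j):ℤ) :=
  Int.isCoprime_iff_gcd_eq_one.mpr (by simpa using H.hcop i j hi hj hij)

lemma Hyp.dvd_MM_iff (H : Hyp b) {i : ℕ} (hi : 1 ≤ i) {a : ℤ} :
    MM b i ∣ a ↔ ((2:ℤ)^i ∣ a ∧ ((b i):ℤ) ∣ a) := by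
  constructor
  · intro h
    exact ⟨(dvd_mul_right _ _).trans h, (dvd_mul_left _ _).trans h⟩
  · rintro ⟨h1, h2⟩
    exact (H.cop2 hi i).mul_dvd h1 h2

lemma Hyp.not_bdvd_pow2 (H : Hyp b) {i : ℕ} (hi : 1 ≤ i) (k : ℕ) :
    ¬ ((b i : ℤ) ∣ (2:ℤ)^k) := by
  intro h
  rcases H.cop2 hi k with ⟨u, v, huv⟩
  have : (b i : ℤ) ∣ 1 := by
    have : (b i : ℤ) ∣ u * 2^k := h.mul_left u
    calc (b i : ℤ) ∣ u * 2^k + v * (b i) := this.add (dvd_mul_left _ _)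
    _ = 1 := huv
  have := Int.le_of_dvd one_pos this
  have := H.b3 hi
  omega

lemma eta_true_iff (n : ℤ) :
    etaB b n = true ↔ ∀ i : ℕ, 1 ≤ i → ¬ (MM b i ∣ n) := by
  simp only [MM, etaB]
  split <;> simp_all

lemma eta_false (i : ℕ) (hi : 1 ≤ i) {n : ℤ} (h : MM b i ∣ n) : etaB b n = false := by
  simp only [MM] at h
  simp only [etaB]
  rw [if_neg]
  push_neg
  exact ⟨i, hi, h⟩

lemma eta_congr {n n' : ℤ} (h : ∀ m : ℕ, 1 ≤ m → ((MM b m ∣ n) ↔ (MM b m ∣ n'))) :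
    etaB b n = etaB b n' := by
  simp only [MM] at h
  simp only [etaB]
  classical
  refine if_congr ?_ rfl rfl
  constructor
  · intro hh m hm; rw [← h m hm]; exact hh m hm
  · intro hh m hm; rw [h m hm]; exact hh m hm

-- CRT
lemma crt (q c : ℕ → ℤ) (F : Finset ℕ)
    (hcop : ∀ i ∈ F, ∀ j ∈ F, i ≠ j → IsCoprime (q i) (q j)) :
    ∃ s : ℤ, ∀ i ∈ F, q i ∣ s - c i := by
  classical
  induction F using Finset.induction_on with
  | empty => exact ⟨0, by simp⟩
  | @insert a F ha IH =>
    obtain ⟨s₁, hs₁⟩ := IH (fun i hi j hj hij =>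
      hcop i (Finset.mem_insert_of_mem hi) j (Finset.mem_insert_of_mem hj) hij)
    have hc : IsCoprime (q a) (∏ j ∈ F, q j) := by
      apply IsCoprime.prod_right
      intro j hj
      exact hcop a (Finset.mem_insert_self a F) j (Finset.mem_insert_of_mem hj)
        (fun h => ha (h ▸ hj))
    obtain ⟨u, v, huv⟩ := hc
    refine ⟨c a * v * (∏ j ∈ F, q j) + s₁ * u * q a, ?_⟩
    intro i hi
    rcases Finset.mem_insert.mp hi with rfl | hiF
    · have : c i * v * (∏ j ∈ F, q j) + s₁ * u * q i - c i
        = (s₁ - c i) * (u * q i) + c i * (u * q i + v * ∏ j ∈ F, q j) - c i := by ring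
      rw [this, huv]
      have : (s₁ - c i) * (u * q i) + c i * 1 - c i = (s₁ - c i) * u * q i := by ring
      rw [this]
      exact dvd_mul_left _ _
    · have h1 : q i ∣ s₁ - c i := hs₁ i hiF
      have h2 : q i ∣ (∏ j ∈ F, q j) := Finset.dvd_prod_of_mem q hiF
      have : c a * v * (∏ j ∈ F, q j) + s₁ * u * q a - c i
          = (c a * v) * (∏ j ∈ F, q j) + (s₁ - c i) * (u * q a) + (c i) * (u * q a + v * ∏ j ∈ F, q j) - c i - (c i * v) * (∏ j ∈ F, q j) := by ring
      rw [this, huv]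
      have : (c a * v) * (∏ j ∈ F, q j) + (s₁ - c i) * (u * q a) + (c i) * 1 - c i - (c i * v) * (∏ j ∈ F, q j)
        = (c a * v) * (∏ j ∈ F, q j) + (s₁ - c i) * (u * q a) - (c i * v) * (∏ j ∈ F, q j) := by ring
      rw [this]
      exact dvd_sub (dvd_add (h2.mul_left _) ((h1.mul_right _))) (h2.mul_left _)


-- closure of orbit characterization
lemma closure_orbit_mem_iff (y z : ℤ → Bool) :
    z ∈ closure {w : ℤ → Bool | ∃ t : ℤ, w = fun m => y (m + t)} ↔
      ∀ N : ℕ, ∃ t : ℤ, ∀ n : ℤ, |n| ≤ (N:ℤ) → z n = y (n + t) := by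
  constructor
  · intro hz N
    rw [mem_closure_iff] at hz
    have hO : IsOpen {w : ℤ → Bool | ∀ n ∈ Finset.Icc (-(N:ℤ)) N, w n = z n} := by
      have : {w : ℤ → Bool | ∀ n ∈ Finset.Icc (-(N:ℤ)) N, w n = z n}
          = ⋂ n ∈ Finset.Icc (-(N:ℤ)) N, (fun w : ℤ → Bool => w n) ⁻¹' {z n} := by
        ext w; simp [Set.mem_iInter]
      rw [this]
      apply isOpen_biInter_finset
      intro n _
      exact IsOpen.preimage (continuous_apply n) (isOpen_discrete ({z n} : Set Bool))
    obtain ⟨w, hw1, hw2⟩ := hz _ hO (by intro n _; rfl)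
    obtain ⟨t, rfl⟩ := hw2
    refine ⟨t, fun n hn => ?_⟩
    have := hw1 n (by rw [Finset.mem_Icc]; constructor <;> [linarith [neg_abs_le n]; linarith [le_abs_self n]])
    exact this.symm
  · intro h
    rw [mem_closure_iff]
    intro O hO hzO
    obtain ⟨I, u, hIu, hsub⟩ := isOpen_pi_iff.mp hO z hzO
    set N : ℕ := I.sup (fun a => a.natAbs) with hN
    obtain ⟨t, ht⟩ := h N
    refine ⟨fun m => y (m + t), ?_, ⟨t, rfl⟩⟩
    apply hsub
    intro a ha
    have habs : |a| ≤ (N:ℤ) := by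
      have := Finset.le_sup (f := fun a : ℤ => a.natAbs) ha
      rw [Int.abs_eq_natAbs]
      exact_mod_cast this
    show y (a + t) ∈ u a
    rw [← ht a habs]
    exact (hIu a ha).2

def Matches (b : ℕ → ℕ) (x : ℤ → Bool) (s : ℤ) (N : ℕ) : Prop :=
  ∀ n : ℤ, |n| ≤ (N:ℤ) → x n = etaB b (n + s)

lemma mem_X_iff {x : ℤ → Bool} :
    x ∈ Xeta b ↔ ∀ N : ℕ, ∃ s : ℤ, Matches b x s N :=
  closure_orbit_mem_iff (etaB b) x

def sh (t : ℤ) (x : ℤ → Bool) : ℤ → Bool := fun n => x (n + t)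

lemma sh_sh (s t : ℤ) (x : ℤ → Bool) : sh s (sh t x) = sh (s + t) x := by
  funext n; simp [sh, add_assoc]

lemma sh_zero (x : ℤ → Bool) : sh 0 x = x := by funext n; simp [sh]

lemma sh_mem {x : ℤ → Bool} (hx : x ∈ Xeta b) (t : ℤ) : sh t x ∈ Xeta b := by
  rw [mem_X_iff] at hx ⊢
  intro N
  obtain ⟨s, hs⟩ := hx (N + t.natAbs)
  refine ⟨t + s, fun n hn => ?_⟩
  have : |n + t| ≤ ((N + t.natAbs : ℕ) : ℤ) := by
    have h1 := abs_add_le n t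
    have h2 : |t| = (t.natAbs : ℤ) := Int.abs_eq_natAbs t
    push_cast
    linarith
  have := hs (n + t) this
  simpa [sh, add_assoc] using this

lemma eta_mem : etaB b ∈ Xeta b := by
  apply subset_closure
  exact ⟨0, by funext m; simp⟩

def Van (b : ℕ → ℕ) (x : ℤ → Bool) (i : ℕ) (r : ℤ) : Prop :=
  ∀ n : ℤ, MM b i ∣ n - r → x n = false

lemma Van_congr {x : ℤ → Bool} {i : ℕ} {r r' : ℤ} (hV : Van b x i r)
    (h : MM b i ∣ r' - r) : Van b x i r' := by
  intro n hn
  exact hV n (by have := hn.add h; simpa using this)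

lemma Van_sh {x : ℤ → Bool} {i : ℕ} {r : ℤ} (hV : Van b x i r) (t : ℤ) :
    Van b (sh t x) i (r - t) := by
  intro n hn
  apply hV (n + t)
  have : n + t - r = n - (r - t) := by ring
  rw [this]; exact hn

lemma Van_eta {i : ℕ} (hi : 1 ≤ i) : Van b (etaB b) i 0 := by
  intro n hn
  exact eta_false i hi (by simpa using hn)


noncomputable def QQ (b : ℕ → ℕ) (K : ℕ) : ℤ :=
  2^(K+1) * ∏ j ∈ Finset.Icc 1 K, (b j : ℤ)

lemma Hyp.QQpos (H : Hyp b) (K : ℕ) : 0 < QQ b K := by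
  unfold QQ
  apply mul_pos (by positivity)
  apply Finset.prod_pos
  intro j hj
  have := H.b3 (Finset.mem_Icc.mp hj).1
  linarith

lemma Hyp.MM_dvd_QQ (H : Hyp b) {i K : ℕ} (hi : 1 ≤ i) (hiK : i ≤ K) :
    MM b i ∣ QQ b K := by
  rw [H.dvd_MM_iff hi]
  unfold QQ
  constructor
  · exact Dvd.dvd.mul_right (pow_dvd_pow 2 (by omega)) _
  · exact Dvd.dvd.mul_left (Finset.dvd_prod_of_mem _ (Finset.mem_Icc.mpr ⟨hi, hiK⟩)) _

lemma pow2_dvd_QQ {K k : ℕ} (h : k ≤ K + 1) : (2:ℤ)^k ∣ QQ b K :=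
  Dvd.dvd.mul_right (pow_dvd_pow 2 h) _

lemma bj_dvd_QQ {K j : ℕ} (h1 : 1 ≤ j) (h2 : j ≤ K) : ((b j : ℤ)) ∣ QQ b K :=
  Dvd.dvd.mul_left (Finset.dvd_prod_of_mem _ (Finset.mem_Icc.mpr ⟨h1, h2⟩)) _

lemma not_pow2_dvd {n : ℤ} {K : ℕ} (hn : n ≠ 0) (h : |n| < 2^K) : ¬ ((2:ℤ)^K ∣ n) := by
  intro hd
  have h1 : (2:ℤ)^K ∣ |n| := (dvd_abs _ _).mpr hd
  have h2 : 0 < |n| := abs_pos.mpr hn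
  have := Int.le_of_dvd h2 h1
  linarith

lemma exists_v2 {n : ℤ} {K : ℕ} (h : ¬ ((2:ℤ)^K ∣ n)) :
    ∃ k : ℕ, k < K ∧ (2:ℤ)^k ∣ n ∧ ¬ ((2:ℤ)^(k+1) ∣ n) := by
  have hex : ∃ j, ¬ ((2:ℤ)^j ∣ n) := ⟨K, h⟩
  classical
  set j0 := Nat.find hex with hj0
  have hspec : ¬ ((2:ℤ)^j0 ∣ n) := Nat.find_spec hex
  have hj0K : j0 ≤ K := Nat.find_le h
  have hj0pos : 1 ≤ j0 := by
    rcases Nat.eq_zero_or_pos j0 with h0 | h1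
    · exfalso; apply hspec; rw [h0]; simp
    · exact h1
  refine ⟨j0 - 1, by omega, ?_, ?_⟩
  · have := Nat.find_min hex (m := j0 - 1) (by omega)
    simpa using not_not.mp this
  · have : j0 - 1 + 1 = j0 := by omega
    rw [this]; exact hspec

-- L1: on every nonzero residue class mod MM i, eta hits `true` along a full AP of modulus QQ i
lemma L1 (H : Hyp b) {i : ℕ} (hi : 1 ≤ i) {r : ℤ} (hr : ¬ (MM b i ∣ r)) :
    ∃ ρ : ℤ, (MM b i ∣ (ρ - r)) ∧ ∀ t : ℤ, etaB b (ρ + QQ b i * t) = true := by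
  classical
  by_cases h2 : (2:ℤ)^i ∣ r
  · -- Case B : 2^i ∣ r, hence b i ∤ r
    have hbir : ¬ ((b i : ℤ) ∣ r) := fun hb => hr ((H.dvd_MM_iff hi).mpr ⟨h2, hb⟩)
    -- congruences: s ≡ 2^i mod 2^(i+1); s ≡ r mod b i; s ≡ 1 mod b j for 1 ≤ j < i
    set F : Finset ℕ := insert 0 (Finset.Icc 1 i) with hF
    set q : ℕ → ℤ := fun j => if j = 0 then 2^(i+1) else (b j : ℤ) with hq
    set c : ℕ → ℤ := fun j => if j = 0 then 2^i else if j = i then r else 1 with hc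
    have hcop : ∀ a ∈ F, ∀ a' ∈ F, a ≠ a' → IsCoprime (q a) (q a') := by
      intro a ha a' ha' hne
      rcases Finset.mem_insert.mp ha with rfl | ha
      · rcases Finset.mem_insert.mp ha' with rfl | ha'
        · exact absurd rfl hne
        · simp only [hq, if_pos rfl, if_neg (by omega : a' ≠ 0)]
          exact H.cop2 (Finset.mem_Icc.mp ha').1 (i+1)
      · rcases Finset.mem_insert.mp ha' with rfl | ha'
        · simp only [hq, if_pos rfl, if_neg (by omega : a ≠ 0)]
          exact (H.cop2 (Finset.mem_Icc.mp ha).1 (i+1)).symm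
        · simp only [hq, if_neg (show a ≠ 0 by have := (Finset.mem_Icc.mp ha).1; omega),
            if_neg (show a' ≠ 0 by have := (Finset.mem_Icc.mp ha').1; omega)]
          exact H.copbb (Finset.mem_Icc.mp ha).1 (Finset.mem_Icc.mp ha').1 hne
    obtain ⟨s, hs⟩ := crt q c F hcop
    have hs0 : (2:ℤ)^(i+1) ∣ s - 2^i := by
      have := hs 0 (Finset.mem_insert_self _ _)
      simpa [hq, hc] using this
    have hsj : ∀ j : ℕ, 1 ≤ j → j ≤ i → (b j : ℤ) ∣ s - (if j = i then r else 1) := by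
      intro j hj1 hj2
      have := hs j (Finset.mem_insert_of_mem (Finset.mem_Icc.mpr ⟨hj1, hj2⟩))
      have hjne : j ≠ 0 := by omega
      simpa [hq, hc, hjne] using this
    refine ⟨s, ?_, ?_⟩
    · rw [H.dvd_MM_iff hi]
      constructor
      · have h1 : (2:ℤ)^i ∣ s - 2^i := (pow_dvd_pow 2 (by omega : i ≤ i+1)).trans hs0
        have : s - r = (s - 2^i) + (2^i - r) := by ring
        rw [this]
        exact h1.add ((dvd_refl ((2:ℤ)^i)).sub h2)
      · have := hsj i hi le_rfl
        simpa using this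
    · intro t
      rw [eta_true_iff]
      intro m hm hdvd
      rw [H.dvd_MM_iff hm] at hdvd
      obtain ⟨hdvd2, hdvdb⟩ := hdvd
      -- n := s + QQ b i * t ; 2-adic valuation is exactly i
      have hn2 : (2:ℤ)^(i+1) ∣ (s + QQ b i * t) - 2^i := by
        have hQ : (2:ℤ)^(i+1) ∣ QQ b i * t := (pow2_dvd_QQ le_rfl).mul_right t
        have : s + QQ b i * t - 2^i = (s - 2^i) + QQ b i * t := by ring
        rw [this]; exact hs0.add hQ
      have hmi : m ≤ i := by
        by_contra hmi
        have hdd : (2:ℤ)^(i+1) ∣ s + QQ b i * t := (pow_dvd_pow 2 (by omega)).trans hdvd2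
        have : (2:ℤ)^(i+1) ∣ (2:ℤ)^i := by
          have := hdd.sub hn2
          simpa using this
        have := Int.le_of_dvd (by positivity) this
        have h2i : (2:ℤ)^i < 2^(i+1) := by
          have : (2:ℤ)^(i+1) = 2 * 2^i := by ring
          rw [this]; nlinarith [pow_pos (show (0:ℤ) < 2 by norm_num) i]
        linarith
      rcases eq_or_lt_of_le hmi with rfl | hmlt
      · -- m = i : b i would divide r
        apply hbir
        have h1 : (b m : ℤ) ∣ s - r := by simpa using hsj m hm le_rfl
        have h2 : (b m : ℤ) ∣ QQ b m * t := (bj_dvd_QQ hm le_rfl).mul_right t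
        have : r = (s + QQ b m * t) - (s - r) - QQ b m * t := by ring
        rw [this]
        exact (hdvdb.sub h1).sub h2
      · -- m < i : b m divides n and n ≡ 1 mod b m
        have h1 : (b m : ℤ) ∣ s - 1 := by
          have := hsj m hm (le_of_lt hmlt)
          simpa [show m ≠ i by omega] using this
        have h2 : (b m : ℤ) ∣ QQ b i * t := (bj_dvd_QQ hm (le_of_lt hmlt)).mul_right t
        have : (b m : ℤ) ∣ 1 := by
          have : (1:ℤ) = (s + QQ b i * t) - (s - 1) - QQ b i * t := by ring
          rw [this]
          exact (hdvdb.sub h1).sub h2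
        have := Int.le_of_dvd one_pos this
        have := H.b3 hm
        linarith
  · -- Case A : 2^i ∤ r
    obtain ⟨k, hki, hk1, hk2⟩ := exists_v2 h2
    -- congruences : s ≡ r mod 2^i ; s ≡ r mod b i ; s ≡ 1 mod b j for 1 ≤ j ≤ k
    set F : Finset ℕ := insert 0 (insert i (Finset.Icc 1 k)) with hF
    set q : ℕ → ℤ := fun j => if j = 0 then 2^i else (b j : ℤ) with hq
    set c : ℕ → ℤ := fun j => if j = 0 then r else if j = i then r else 1 with hc
    have hmemicc : ∀ {a}, a ∈ Finset.Icc 1 k → (1 ≤ a ∧ a ≤ k) := fun h => Finset.mem_Icc.mp h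
    have hcop : ∀ a ∈ F, ∀ a' ∈ F, a ≠ a' → IsCoprime (q a) (q a') := by
      intro a ha a' ha' hne
      have hmem : ∀ {x : ℕ}, x ∈ F → x = 0 ∨ (1 ≤ x ∧ x ≤ i) := by
        intro x hx
        rcases Finset.mem_insert.mp hx with rfl | hx
        · exact Or.inl rfl
        rcases Finset.mem_insert.mp hx with rfl | hx
        · exact Or.inr ⟨hi, le_rfl⟩
        · have := hmemicc hx; omega
      rcases hmem ha with rfl | ha1
      · rcases hmem ha' with rfl | ha1'
        · exact absurd rfl hne
        · simp only [hq, if_pos rfl, if_neg (by omega : a' ≠ 0)]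
          exact H.cop2 ha1'.1 i
      · rcases hmem ha' with rfl | ha1'
        · simp only [hq, if_pos rfl, if_neg (by omega : a ≠ 0)]
          exact (H.cop2 ha1.1 i).symm
        · simp only [hq, if_neg (by omega : a ≠ 0), if_neg (by omega : a' ≠ 0)]
          exact H.copbb ha1.1 ha1'.1 hne
    obtain ⟨s, hs⟩ := crt q c F hcop
    have hs0 : (2:ℤ)^i ∣ s - r := by
      have := hs 0 (Finset.mem_insert_self _ _)
      simpa [hq, hc] using this
    have hsi : (b i : ℤ) ∣ s - r := by
      have := hs i (Finset.mem_insert_of_mem (Finset.mem_insert_self _ _))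
      have hine : i ≠ 0 := by omega
      simpa [hq, hc, hine] using this
    have hsj : ∀ j : ℕ, 1 ≤ j → j ≤ k → (b j : ℤ) ∣ s - 1 := by
      intro j hj1 hj2
      have := hs j (Finset.mem_insert_of_mem (Finset.mem_insert_of_mem
        (Finset.mem_Icc.mpr ⟨hj1, hj2⟩)))
      have h1 : j ≠ 0 := by omega
      have h2 : j ≠ i := by omega
      simpa [hq, hc, h1, h2] using this
    refine ⟨s, ?_, ?_⟩
    · exact (H.dvd_MM_iff hi).mpr ⟨hs0, hsi⟩
    · intro t
      rw [eta_true_iff]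
      intro m hm hdvd
      rw [H.dvd_MM_iff hm] at hdvd
      obtain ⟨hdvd2, hdvdb⟩ := hdvd
      -- n ≡ r mod 2^(k+1), so v2(n) = k
      have hnr : (2:ℤ)^(k+1) ∣ (s + QQ b i * t) - r := by
        have hQ : (2:ℤ)^(k+1) ∣ QQ b i * t := (pow2_dvd_QQ (by omega)).mul_right t
        have h1 : (2:ℤ)^(k+1) ∣ s - r := (pow_dvd_pow 2 (by omega)).trans hs0
        have : s + QQ b i * t - r = (s - r) + QQ b i * t := by ring
        rw [this]; exact h1.add hQ
      have hmk : m ≤ k := by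
        by_contra hmk
        have hdd : (2:ℤ)^(k+1) ∣ s + QQ b i * t := (pow_dvd_pow 2 (by omega)).trans hdvd2
        exact hk2 (by
          have := hdd.sub hnr
          have he : s + QQ b i * t - (s + QQ b i * t - r) = r := by ring
          rwa [he] at this)
      -- b m ∣ n and n ≡ 1 mod b m for m ≤ k
      have h1 : (b m : ℤ) ∣ s - 1 := hsj m hm hmk
      have h2 : (b m : ℤ) ∣ QQ b i * t := (bj_dvd_QQ hm (by omega)).mul_right t
      have : (b m : ℤ) ∣ 1 := by
        have he : (1:ℤ) = (s + QQ b i * t) - (s - 1) - QQ b i * t := by ring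
        rw [he]
        exact (hdvdb.sub h1).sub h2
      have := Int.le_of_dvd one_pos this
      have := H.b3 hm
      linarith

-- existence of a vanishing residue class
lemma exists_Van (H : Hyp b) {x : ℤ → Bool} (hx : x ∈ Xeta b) {i : ℕ} (hi : 1 ≤ i) :
    ∃ r : ℤ, Van b x i r := by
  classical
  rw [mem_X_iff] at hx
  choose sN hsN using hx
  have hMpos : 0 < MM b i := H.MMpos hi
  set Mn : ℕ := (MM b i).toNat with hMn
  have hMn0 : 0 < Mn := by omega
  have hMcast : (Mn : ℤ) = MM b i := Int.toNat_of_nonneg hMpos.le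
  have : ∀ N : ℕ, ((sN N) % (MM b i)).toNat < Mn := by
    intro N
    have h1 := Int.emod_nonneg (sN N) (by omega : MM b i ≠ 0)
    have h2 := Int.emod_lt_of_pos (sN N) hMpos
    omega
  set f : ℕ → Fin Mn := fun N => ⟨((sN N) % (MM b i)).toNat, this N⟩ with hf
  obtain ⟨v, hv⟩ := Finite.exists_infinite_fiber f
  have hinf : (f ⁻¹' {v}).Infinite := Set.infinite_coe_iff.mp hv
  refine ⟨-(v : ℤ), ?_⟩
  intro n hn
  obtain ⟨N, hNfib, hNn⟩ := hinf.exists_gt n.natAbs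
  have hmatch := hsN N n (by
    rw [Int.abs_eq_natAbs]; exact_mod_cast hNn.le)
  rw [hmatch]
  apply eta_false i hi
  -- MM ∣ n + sN N
  have hfv : ((sN N) % (MM b i)).toNat = (v : ℕ) := by
    have : f N = v := hNfib
    exact congrArg Fin.val this
  have hmod : (sN N) % (MM b i) = (v : ℤ) := by
    have h1 := Int.emod_nonneg (sN N) (by omega : MM b i ≠ 0)
    omega
  have h1 : MM b i ∣ sN N - (v:ℤ) := by
    rw [← hmod]
    exact Int.dvd_self_sub_of_emod_eq rfl
  have h2 : n - -(v:ℤ) = n + (v:ℤ) := by ring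
  rw [h2] at hn
  have : n + sN N = (n + (v:ℤ)) + (sN N - (v:ℤ)) := by ring
  rw [this]
  exact hn.add h1

lemma L2 (H : Hyp b) {x : ℤ → Bool} {s r : ℤ} {i : ℕ} (hi : 1 ≤ i)
    (hV : Van b x i r) {N : ℕ} (hN : QQ b i ≤ (N:ℤ)) (hm : Matches b x s N) :
    MM b i ∣ (r + s) := by
  by_contra hcon
  obtain ⟨ρ, hρ1, hρ2⟩ := L1 H hi hcon
  set Q := QQ b i with hQ
  have hQpos : 0 < Q := H.QQpos i
  set m : ℤ := (ρ - s) % Q with hmdef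
  have hm0 : 0 ≤ m := Int.emod_nonneg _ (by omega)
  have hmQ : m < Q := Int.emod_lt_of_pos _ hQpos
  have habs : |m| ≤ (N:ℤ) := by rw [abs_of_nonneg hm0]; omega
  have hform : m + s = ρ + Q * (-((ρ - s) / Q)) := by
    have h := Int.emod_add_mul_ediv (ρ - s) Q
    rw [hmdef]
    linarith [h]
  have h1 : etaB b (m + s) = true := by rw [hform]; exact hρ2 _
  have h2 : x m = false := by
    apply hV
    have hQM : MM b i ∣ Q * (-((ρ - s) / Q)) := (H.MM_dvd_QQ hi le_rfl).mul_right _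
    have he : m - r = (ρ - (r + s)) + Q * (-((ρ - s) / Q)) := by linarith [hform]
    rw [he]
    exact hρ1.add hQM
  have := hm m habs
  rw [h1, h2] at this
  exact Bool.false_ne_true this

lemma Van_unique (H : Hyp b) {x : ℤ → Bool} (hx : x ∈ Xeta b) {i : ℕ} (hi : 1 ≤ i)
    {r r' : ℤ} (h1 : Van b x i r) (h2 : Van b x i r') : MM b i ∣ (r - r') := by
  obtain ⟨s, hs⟩ := mem_X_iff.mp hx (QQ b i).toNat
  have hQN : QQ b i ≤ ((QQ b i).toNat : ℤ) := by
    rw [Int.toNat_of_nonneg (H.QQpos i).le]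
  have hA := L2 H hi h1 hQN hs
  have hB := L2 H hi h2 hQN hs
  have : r - r' = (r + s) - (r' + s) := by ring
  rw [this]
  exact hA.sub hB

lemma Van_compat (H : Hyp b) {x : ℤ → Bool} (hx : x ∈ Xeta b) {i j : ℕ}
    (hi : 1 ≤ i) (hij : i ≤ j) {ri rj : ℤ}
    (h1 : Van b x i ri) (h2 : Van b x j rj) : (2:ℤ)^i ∣ (ri - rj) := by
  have hj : 1 ≤ j := le_trans hi hij
  set N : ℕ := (max (QQ b i) (QQ b j)).toNat with hN
  obtain ⟨s, hs⟩ := mem_X_iff.mp hx N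
  have hNi : QQ b i ≤ (N:ℤ) := by
    rw [hN, Int.toNat_of_nonneg (le_trans (H.QQpos i).le (le_max_left _ _))]
    exact le_max_left _ _
  have hNj : QQ b j ≤ (N:ℤ) := by
    rw [hN, Int.toNat_of_nonneg (le_trans (H.QQpos i).le (le_max_left _ _))]
    exact le_max_right _ _
  have hA := L2 H hi h1 hNi hs
  have hB := L2 H hj h2 hNj hs
  have hA2 : (2:ℤ)^i ∣ ri + s := (dvd_mul_right _ _).trans hA
  have hB2 : (2:ℤ)^i ∣ rj + s := ((pow_dvd_pow 2 hij).mul_right _).trans hB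
  have : ri - rj = (ri + s) - (rj + s) := by ring
  rw [this]
  exact hA2.sub hB2

open Classical in
noncomputable def R (b : ℕ → ℕ) (x : ℤ → Bool) (i : ℕ) : ℤ :=
  if h : ∃ r, Van b x i r then h.choose else 0

lemma Van_R (H : Hyp b) {x : ℤ → Bool} (hx : x ∈ Xeta b) {i : ℕ} (hi : 1 ≤ i) :
    Van b x i (R b x i) := by
  have h : ∃ r, Van b x i r := exists_Van H hx hi
  rw [R, dif_pos h]
  exact h.choose_spec

lemma R_congr (H : Hyp b) {x : ℤ → Bool} (hx : x ∈ Xeta b) {i : ℕ} (hi : 1 ≤ i)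
    {r : ℤ} (hV : Van b x i r) : MM b i ∣ (R b x i - r) :=
  Van_unique H hx hi (Van_R H hx hi) hV

-- value is forced to true away from the exceptional 2-adic position
lemma val_one (H : Hyp b) {x : ℤ → Bool} (hx : x ∈ Xeta b) {n : ℤ} {i : ℕ}
    (hi : 1 ≤ i) (h2 : ¬ ((2:ℤ)^i ∣ n - R b x i))
    (hall : ∀ j : ℕ, 1 ≤ j → ¬ (MM b j ∣ n - R b x j)) : x n = true := by
  -- take a window match with radius big enough for L2 for all j ≤ i, and |n|
  set N : ℕ := n.natAbs + (Finset.Icc 1 i).sup (fun j => (QQ b j).toNat) with hN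
  obtain ⟨s, hs⟩ := mem_X_iff.mp hx N
  have hQle : ∀ j : ℕ, 1 ≤ j → j ≤ i → QQ b j ≤ (N:ℤ) := by
    intro j h1 h2'
    have hj : (QQ b j).toNat ≤ (Finset.Icc 1 i).sup (fun j => (QQ b j).toNat) :=
      Finset.le_sup (f := fun j => (QQ b j).toNat) (Finset.mem_Icc.mpr ⟨h1, h2'⟩)
    have h3 : ((QQ b j).toNat : ℤ) = QQ b j := Int.toNat_of_nonneg (H.QQpos j).le
    have h4 : (QQ b j).toNat ≤ N := by rw [hN]; omega
    calc QQ b j = ((QQ b j).toNat : ℤ) := h3.symm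
      _ ≤ (N : ℤ) := by exact_mod_cast h4
  have hclass : ∀ j : ℕ, 1 ≤ j → j ≤ i → MM b j ∣ (R b x j + s) := by
    intro j h1 h2'
    exact L2 H h1 (Van_R H hx h1) (hQle j h1 h2') hs
  have hxn : x n = etaB b (n + s) := by
    apply hs n
    have h4 : n.natAbs ≤ N := by rw [hN]; omega
    calc |n| = (n.natAbs : ℤ) := Int.abs_eq_natAbs n
      _ ≤ (N : ℤ) := by exact_mod_cast h4
  rw [hxn, eta_true_iff]
  intro m hm hdvd
  by_cases hmi : m ≤ i
  · -- then MM m ∣ n - R b x m, contradiction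
    apply hall m hm
    have h1 : MM b m ∣ (R b x m + s) := hclass m hm hmi
    have : n - R b x m = (n + s) - (R b x m + s) := by ring
    rw [this]
    exact hdvd.sub h1
  · -- m > i : 2^i ∣ n + s and 2^i ∣ R x i + s gives 2^i ∣ n - R x i
    apply h2
    have ha : (2:ℤ)^i ∣ n + s := by
      have : (2:ℤ)^i ∣ MM b m := by
        unfold MM
        exact Dvd.dvd.mul_right (pow_dvd_pow 2 (by omega)) _
      exact this.trans hdvd
    have hb' : (2:ℤ)^i ∣ (R b x i + s) := (dvd_mul_right _ _).trans (hclass i hi le_rfl)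
    have : n - R b x i = (n + s) - (R b x i + s) := by ring
    rw [this]
    exact ha.sub hb'

lemma forced (H : Hyp b) {x y : ℤ → Bool} (hx : x ∈ Xeta b) (hy : y ∈ Xeta b)
    (hcl : ∀ i : ℕ, 1 ≤ i → MM b i ∣ (R b x i - R b y i))
    {n : ℤ} (hn : ∃ i : ℕ, 1 ≤ i ∧ ¬ ((2:ℤ)^i ∣ n - R b x i)) : x n = y n := by
  by_cases hz : ∃ j : ℕ, 1 ≤ j ∧ MM b j ∣ (n - R b x j)
  · obtain ⟨j, hj, hjd⟩ := hz
    have h1 : x n = false := Van_R H hx hj n hjd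
    have h2 : y n = false := by
      apply Van_R H hy hj n
      have : n - R b y j = (n - R b x j) + (R b x j - R b y j) := by ring
      rw [this]
      exact hjd.add (hcl j hj)
    rw [h1, h2]
  · push_neg at hz
    obtain ⟨i, hi, hi2⟩ := hn
    have h1 : x n = true := val_one H hx hi hi2 (fun j hj => hz j hj)
    have h2 : y n = true := by
      apply val_one H hy hi
      · intro hcon
        apply hi2
        have hM2 : (2:ℤ)^i ∣ (R b x i - R b y i) := (dvd_mul_right _ _).trans (hcl i hi)
        have he : n - R b x i = (n - R b y i) - (R b x i - R b y i) := by ring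
        rw [he]
        exact hcon.sub hM2
      · intro j hj hcon
        apply hz j hj
        have he2 : n - R b x j = (n - R b y j) - (R b x j - R b y j) := by ring
        rw [he2]
        exact hcon.sub (hcl j hj)
    rw [h1, h2]

lemma pow2_eq {d : ℤ} (h : ∀ i : ℕ, 1 ≤ i → (2:ℤ)^i ∣ d) : d = 0 := by
  by_contra hd
  have h1 := h (d.natAbs + 1) (by omega)
  have h2 : |d| < 2^(d.natAbs + 1) := by
    rw [Int.abs_eq_natAbs]
    have : (d.natAbs : ℤ) < 2^(d.natAbs+1) := by
      have := Nat.lt_two_pow_self (n := d.natAbs)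
      have h3 : (2:ℤ)^d.natAbs < 2^(d.natAbs+1) := by
        have : (2:ℤ)^(d.natAbs+1) = 2 * 2^d.natAbs := by ring
        rw [this]; nlinarith [pow_pos (show (0:ℤ) < 2 by norm_num) d.natAbs]
      calc (d.natAbs : ℤ) < 2^d.natAbs := by exact_mod_cast this
        _ < _ := h3
    exact this
  exact not_pow2_dvd hd h2 h1

lemma D2 (H : Hyp b) {x y : ℤ → Bool} (hx : x ∈ Xeta b) (hy : y ∈ Xeta b)
    (hne : x ≠ y) (hcl : ∀ i : ℕ, 1 ≤ i → MM b i ∣ (R b x i - R b y i)) :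
    ∃ m : ℤ, ∀ i : ℕ, 1 ≤ i →
      ((2:ℤ)^i ∣ m - R b x i) ∧ ¬ ((b i : ℤ) ∣ m - R b x i) := by
  have : ∃ n : ℤ, x n ≠ y n := by
    by_contra hc
    push_neg at hc
    exact hne (funext hc)
  obtain ⟨m, hm⟩ := this
  refine ⟨m, fun i hi => ?_⟩
  have h2 : (2:ℤ)^i ∣ m - R b x i := by
    by_contra hcon
    exact hm (forced H hx hy hcl ⟨i, hi, hcon⟩)
  refine ⟨h2, fun hbd => ?_⟩
  have hMd : MM b i ∣ m - R b x i := (H.dvd_MM_iff hi).mpr ⟨h2, hbd⟩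
  have hx0 : x m = false := Van_R H hx hi m hMd
  have hy0 : y m = false := by
    apply Van_R H hy hi m
    have : m - R b y i = (m - R b x i) + (R b x i - R b y i) := by ring
    rw [this]
    exact hMd.add (hcl i hi)
  rw [hx0, hy0] at hm
  exact hm rfl

-- the central window of eta of radius N is (QQ b (N+1))-periodic
lemma eta_window_periodic (H : Hyp b) (N : ℕ) :
    ∀ (n t : ℤ), |n| ≤ (N:ℤ) → etaB b (n + t * QQ b (N+1)) = etaB b n := by
  intro n t hn
  set K : ℕ := N + 1 with hK
  have h2K : (N:ℤ) < 2^K := by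
    have h1 : (N:ℕ) < 2^K := by
      calc N < K := by omega
        _ < 2^K := Nat.lt_two_pow_self (n := K)
    exact_mod_cast h1
  by_cases hn0 : n = 0
  · subst hn0
    simp only [zero_add]
    have hη0 : etaB b (0:ℤ) = false := eta_false 1 le_rfl (dvd_zero _)
    rw [hη0]
    by_cases ht : t = 0
    · subst ht; simpa using hη0
    · apply eta_false 1 le_rfl
      exact ((H.MM_dvd_QQ le_rfl (by omega)).mul_left t)
  · apply eta_congr
    intro m hm
    by_cases hmK : m ≤ K
    · have hMQ : MM b m ∣ t * QQ b K := (H.MM_dvd_QQ hm hmK).mul_left t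
      constructor
      · intro h
        have := h.sub hMQ
        simpa using this
      · intro h
        exact (by simpa using h.add hMQ : MM b m ∣ n + t * QQ b K)
    · -- m > K : both false
      have hnabs : ¬ ((2:ℤ)^K ∣ n) := not_pow2_dvd hn0 (by linarith)
      constructor
      · intro h
        exfalso
        apply hnabs
        have h2 : (2:ℤ)^K ∣ n + t * QQ b K := by
          have ha : (2:ℤ)^K ∣ MM b m := by
            unfold MM
            exact Dvd.dvd.mul_right (pow_dvd_pow 2 (by omega)) _
          exact ha.trans h
        have h3 : (2:ℤ)^K ∣ t * QQ b K := (pow2_dvd_QQ (by omega)).mul_left t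
        have := h2.sub h3
        simpa using this
      · intro h
        exfalso
        apply hnabs
        have ha : (2:ℤ)^K ∣ MM b m := by
          unfold MM
          exact Dvd.dvd.mul_right (pow_dvd_pow 2 (by omega)) _
        exact ha.trans h

-- every point of X has eta in its orbit closure (key step to minimality)
lemma min_dense (H : Hyp b) {y : ℤ → Bool} (hy : y ∈ Xeta b) (N : ℕ) :
    ∃ t : ℤ, ∀ n : ℤ, |n| ≤ (N:ℤ) → y (n + t) = etaB b n := by
  set P : ℤ := QQ b (N+1) with hP
  have hPpos : 0 < P := H.QQpos (N+1)
  obtain ⟨s, hs⟩ := mem_X_iff.mp hy (N + P.toNat)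
  set t : ℤ := -(s % P) with ht
  have htP : 0 ≤ s % P := Int.emod_nonneg _ (by omega)
  have htP2 : s % P < P := Int.emod_lt_of_pos _ hPpos
  refine ⟨t, fun n hn => ?_⟩
  have habs : |n + t| ≤ ((N + P.toNat : ℕ) : ℤ) := by
    have h1 : (P.toNat : ℤ) = P := Int.toNat_of_nonneg hPpos.le
    have := abs_le.mp hn
    rw [abs_le]
    push_cast
    omega
  have h1 : y (n + t) = etaB b (n + t + s) := hs (n + t) habs
  rw [h1]
  have h2 : n + t + s = n + (s / P) * P := by
    have := Int.emod_add_mul_ediv s P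
    rw [ht]
    linarith
  rw [h2]
  exact eta_window_periodic H N n (s / P) hn

lemma minimality (H : Hyp b) {A : Set (ℤ → Bool)} (hA : IsClosed A)
    (hAX : A ⊆ Xeta b) (hinv : ∀ x ∈ A, ∀ t : ℤ, sh t x ∈ A)
    (hne : A.Nonempty) : Xeta b ⊆ A := by
  obtain ⟨y, hyA⟩ := hne
  have hyX : y ∈ Xeta b := hAX hyA
  -- eta ∈ closure of orbit of y ⊆ A
  have hetaA : etaB b ∈ A := by
    rw [← hA.closure_eq]
    have : etaB b ∈ closure {w : ℤ → Bool | ∃ t : ℤ, w = fun m => y (m + t)} := by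
      rw [closure_orbit_mem_iff]
      intro N
      obtain ⟨t, ht⟩ := min_dense H hyX N
      exact ⟨t, fun n hn => (ht n hn).symm⟩
    apply closure_mono _ this
    rintro w ⟨t, rfl⟩
    exact hinv y hyA t
  -- orbit of eta ⊆ A, and X = closure of that orbit
  intro x hx
  rw [← hA.closure_eq]
  have : x ∈ closure {w : ℤ → Bool | ∃ t : ℤ, w = fun m => etaB b (m + t)} := hx
  apply closure_mono _ this
  rintro w ⟨t, rfl⟩
  exact hinv _ hetaA t

open Classical in
noncomputable def xPt (b : ℕ → ℕ) (r : ℕ → ℤ) (n0 : ℤ) (ε : Bool) : ℤ → Bool :=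
  fun n => if n = n0 then ε
    else (if ∀ i : ℕ, 1 ≤ i → ¬ (MM b i ∣ n - r i) then true else false)

lemma D1 (H : Hyp b) (r : ℕ → ℤ) (n0 : ℤ)
    (h2 : ∀ i : ℕ, 1 ≤ i → (2:ℤ)^i ∣ n0 - r i)
    (hb : ∀ i : ℕ, 1 ≤ i → ¬ ((b i : ℤ) ∣ n0 - r i)) (ε : Bool) :
    xPt b r n0 ε ∈ Xeta b ∧ (∀ i : ℕ, 1 ≤ i → Van b (xPt b r n0 ε) i (r i)) ∧
      xPt b r n0 ε n0 = ε := by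
  classical
  refine ⟨?_, ?_, by simp [xPt]⟩
  · -- membership
    rw [mem_X_iff]
    intro N
    set K : ℕ := N + n0.natAbs + 1 with hK
    have hK1 : 1 ≤ K := by omega
    have hKbig : ∀ n : ℤ, |n| ≤ (N:ℤ) → n ≠ n0 → ¬ ((2:ℤ)^K ∣ (n - n0)) := by
      intro n hn hne
      apply not_pow2_dvd (by omega : n - n0 ≠ 0)
      have h1 : |n - n0| ≤ |n| + |n0| := abs_sub _ _
      have h2' : |n0| = (n0.natAbs : ℤ) := Int.abs_eq_natAbs n0
      have h3 : ((N + n0.natAbs : ℕ) : ℤ) < 2^K := by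
        have : (N + n0.natAbs) < 2^K := by
          calc N + n0.natAbs < K := by omega
            _ < 2^K := Nat.lt_two_pow_self (n := K)
        exact_mod_cast this
      push_cast at h3 ⊢
      omega
    -- CRT system
    set F : Finset ℕ := insert 0 (Finset.Icc 1 (K+1)) with hF
    set q : ℕ → ℤ := fun j => if j = 0 then 2^(K+1) else (b j : ℤ) with hq
    set c : ℕ → ℤ := fun j => if j = 0 then ((if ε then 2^K else 0) - n0)
      else if j = K+1 then (if ε then 0 else -n0) else -(r j) with hc
    have hcop : ∀ a ∈ F, ∀ a' ∈ F, a ≠ a' → IsCoprime (q a) (q a') := by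
      intro a ha a' ha' hne
      rcases Finset.mem_insert.mp ha with rfl | ha
      · rcases Finset.mem_insert.mp ha' with rfl | ha'
        · exact absurd rfl hne
        · simp only [hq, if_pos rfl, if_neg (show a' ≠ 0 by have := (Finset.mem_Icc.mp ha').1; omega)]
          exact H.cop2 (Finset.mem_Icc.mp ha').1 (K+1)
      · rcases Finset.mem_insert.mp ha' with rfl | ha'
        · simp only [hq, if_pos rfl, if_neg (show a ≠ 0 by have := (Finset.mem_Icc.mp ha).1; omega)]
          exact (H.cop2 (Finset.mem_Icc.mp ha).1 (K+1)).symm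
        · simp only [hq, if_neg (show a ≠ 0 by have := (Finset.mem_Icc.mp ha).1; omega),
            if_neg (show a' ≠ 0 by have := (Finset.mem_Icc.mp ha').1; omega)]
          exact H.copbb (Finset.mem_Icc.mp ha).1 (Finset.mem_Icc.mp ha').1 hne
    obtain ⟨s, hs⟩ := crt q c F hcop
    have hs0 : (2:ℤ)^(K+1) ∣ s - ((if ε then 2^K else 0) - n0) := by
      have := hs 0 (Finset.mem_insert_self _ _)
      simpa [hq, hc] using this
    have hsj : ∀ j : ℕ, 1 ≤ j → j ≤ K → (b j : ℤ) ∣ s + r j := by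
      intro j hj1 hj2
      have := hs j (Finset.mem_insert_of_mem (Finset.mem_Icc.mpr ⟨hj1, by omega⟩))
      have e1 : j ≠ 0 := by omega
      have e2 : j ≠ K+1 := by omega
      simp only [hq, hc, if_neg e1, if_neg e2] at this
      have he : s + r j = s - (-(r j)) := by ring
      rw [he]; exact this
    have hsK1 : (b (K+1) : ℤ) ∣ s - (if ε then 0 else -n0) := by
      have := hs (K+1) (Finset.mem_insert_of_mem (Finset.mem_Icc.mpr ⟨by omega, le_rfl⟩))
      have e1 : K+1 ≠ 0 := by omega
      simp only [hq, hc, if_neg e1, if_pos rfl] at this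
      exact this
    -- 2-adic structure of w := n0 + s
    set w : ℤ := n0 + s with hw
    have hw1 : (2:ℤ)^K ∣ w := by
      have h1 : (2:ℤ)^K ∣ s - ((if ε then 2^K else 0) - n0) :=
        (pow_dvd_pow 2 (by omega)).trans hs0
      have h2' : (2:ℤ)^K ∣ (if ε then (2:ℤ)^K else 0) := by
        cases ε <;> simp
      have he : w = (s - ((if ε then 2^K else 0) - n0)) + (if ε then (2:ℤ)^K else 0) := by
        rw [hw]; cases ε <;> simp <;> ring
      rw [he]
      exact h1.add h2'
    have hw2 : ε = true → ¬ ((2:ℤ)^(K+1) ∣ w) := by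
      intro hε hcon
      rw [hε] at hs0
      simp only [if_pos rfl] at hs0
      have : (2:ℤ)^(K+1) ∣ (2:ℤ)^K := by
        have he : (2:ℤ)^K = w - (s - (2^K - n0)) := by rw [hw]; ring
        rw [he]
        exact hcon.sub hs0
      have h1 := Int.le_of_dvd (by positivity) this
      have h2' : (2:ℤ)^K < 2^(K+1) := by
        have he : (2:ℤ)^(K+1) = 2 * 2^K := by ring
        rw [he]; nlinarith [pow_pos (show (0:ℤ) < 2 by norm_num) K]
      linarith
    have hw2' : ε = false → (2:ℤ)^(K+1) ∣ w := by
      intro hε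
      rw [hε] at hs0
      simp only [Bool.false_eq_true, if_neg] at hs0
      have he : w = (s - (0 - n0)) + 0 := by rw [hw]; ring
      rw [he]
      simpa using hs0
    refine ⟨s, fun n hn => ?_⟩
    by_cases hnn0 : n = n0
    · subst hnn0
      have hval : xPt b r n ε n = ε := by simp [xPt]
      rw [hval]
      cases ε with
      | true =>
        symm
        rw [eta_true_iff]
        intro m hm hdvd
        rw [H.dvd_MM_iff hm] at hdvd
        obtain ⟨hdd2, hddb⟩ := hdvd
        have hmK : m ≤ K := by
          by_contra hmK
          exact hw2 rfl ((pow_dvd_pow 2 (by omega)).trans hdd2)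
        have h1 : (b m : ℤ) ∣ s + r m := hsj m hm hmK
        apply hb m hm
        have he : n - r m = (n + s) - (s + r m) := by ring
        rw [he]
        exact hddb.sub h1
      | false =>
        symm
        apply eta_false (K+1) (by omega)
        rw [H.dvd_MM_iff (show 1 ≤ K+1 by omega)]
        refine ⟨hw2' rfl, ?_⟩
        have h1 := hsK1
        simp only [Bool.false_eq_true, if_neg] at h1
        have he : n + s = s - (-n) := by ring
        rw [he]
        exact h1
    · obtain ⟨k, hkK, hk1, hk2⟩ := exists_v2 (hKbig n hn hnn0)
      have hkK1 : k + 1 ≤ K := by omega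
      have hwk : (2:ℤ)^(k+1) ∣ w := (pow_dvd_pow 2 (by omega)).trans hw1
      have V2a : (2:ℤ)^k ∣ n + s := by
        have he : n + s = (n - n0) + w := by rw [hw]; ring
        rw [he]
        exact hk1.add ((pow_dvd_pow 2 (by omega)).trans hwk)
      have V2b : ¬ ((2:ℤ)^(k+1) ∣ n + s) := by
        intro hcon
        apply hk2
        have he : n - n0 = (n + s) - w := by rw [hw]; ring
        rw [he]
        exact hcon.sub hwk
      have V1 : ∀ i : ℕ, 1 ≤ i → ((2:ℤ)^i ∣ n - r i ↔ i ≤ k) := by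
        intro i hi
        constructor
        · intro hdv
          by_contra hik
          apply hk2
          have ha : (2:ℤ)^(k+1) ∣ n - r i := (pow_dvd_pow 2 (by omega)).trans hdv
          have hb' : (2:ℤ)^(k+1) ∣ n0 - r i := (pow_dvd_pow 2 (by omega)).trans (h2 i hi)
          have he : n - n0 = (n - r i) - (n0 - r i) := by ring
          rw [he]
          exact ha.sub hb'
        · intro hik
          have he : n - r i = (n - n0) + (n0 - r i) := by ring
          rw [he]
          exact ((pow_dvd_pow 2 hik).trans hk1).add (h2 i hi)
      have V3 : ∀ m : ℕ, 1 ≤ m → (MM b m ∣ n + s ↔ (m ≤ k ∧ (b m:ℤ) ∣ n - r m)) := by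
        intro m hm
        rw [H.dvd_MM_iff hm]
        constructor
        · rintro ⟨hdd2, hddb⟩
          have hmk : m ≤ k := by
            by_contra hmk
            exact V2b ((pow_dvd_pow 2 (by omega)).trans hdd2)
          refine ⟨hmk, ?_⟩
          have h1 : (b m : ℤ) ∣ s + r m := hsj m hm (by omega)
          have he : n - r m = (n + s) - (s + r m) := by ring
          rw [he]
          exact hddb.sub h1
        · rintro ⟨hmk, hbd⟩
          constructor
          · exact (pow_dvd_pow 2 hmk).trans V2a
          · have h1 : (b m : ℤ) ∣ s + r m := hsj m hm (by omega)
            have he : n + s = (n - r m) + (s + r m) := by ring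
            rw [he]
            exact hbd.add h1
      have hPP : (∀ i : ℕ, 1 ≤ i → ¬ (MM b i ∣ n - r i)) ↔
          (∀ m : ℕ, 1 ≤ m → ¬ (MM b m ∣ n + s)) := by
        constructor
        · intro hP m hm hdv
          rcases (V3 m hm).mp hdv with ⟨hmk, hbd⟩
          exact hP m hm ((H.dvd_MM_iff hm).mpr ⟨(V1 m hm).mpr hmk, hbd⟩)
        · intro hP i hi hdv
          rw [H.dvd_MM_iff hi] at hdv
          obtain ⟨ha2, hab⟩ := hdv
          have hik := (V1 i hi).mp ha2
          exact hP i hi ((V3 i hi).mpr ⟨hik, hab⟩)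
      simp only [xPt, if_neg hnn0]
      by_cases hP : ∀ i : ℕ, 1 ≤ i → ¬ (MM b i ∣ n - r i)
      · rw [if_pos hP]
        symm
        rw [eta_true_iff]
        exact hPP.mp hP
      · rw [if_neg hP]
        symm
        have hcc : ¬ (∀ m : ℕ, 1 ≤ m → ¬ (MM b m ∣ n + s)) := fun h => hP (hPP.mpr h)
        push_neg at hcc
        obtain ⟨m, hm, hdv⟩ := hcc
        exact eta_false m hm hdv
  · -- Van
    intro i hi n hn
    have hne : n ≠ n0 := by
      intro he
      apply hb i hi
      rw [← he]
      exact ((H.dvd_MM_iff hi).mp hn).2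
    have hP : ¬ (∀ j : ℕ, 1 ≤ j → ¬ (MM b j ∣ n - r j)) := by
      push_neg
      exact ⟨i, hi, hn⟩
    simp only [xPt, if_neg hne, if_neg hP]

-- shift as a self-homeomorphism of the subtype
lemma sh_continuous (t : ℤ) : Continuous (sh t : (ℤ → Bool) → (ℤ → Bool)) := by
  apply continuous_pi
  intro n
  exact continuous_apply (n + t)

noncomputable def shS (b : ℕ → ℕ) (t : ℤ) : ↥(Xeta b) ≃ₜ ↥(Xeta b) where
  toFun := fun y => ⟨sh t ↑y, sh_mem y.2 t⟩
  invFun := fun y => ⟨sh (-t) ↑y, sh_mem y.2 (-t)⟩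
  left_inv := by
    intro y
    apply Subtype.ext
    show sh (-t) (sh t ↑y) = ↑y
    rw [sh_sh]
    simp [sh_zero]
  right_inv := by
    intro y
    apply Subtype.ext
    show sh t (sh (-t) ↑y) = ↑y
    rw [sh_sh]
    simp [sh_zero]
  continuous_toFun := by
    apply Continuous.subtype_mk
    exact (sh_continuous t).comp continuous_subtype_val
  continuous_invFun := by
    apply Continuous.subtype_mk
    exact (sh_continuous (-t)).comp continuous_subtype_val

lemma shS_coe (t : ℤ) (y : ↥(Xeta b)) : (↑(shS b t y) : ℤ → Bool) = sh t ↑y := rfl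

-- minimality at the subtype level
lemma minS (H : Hyp b) {A : Set ↥(Xeta b)} (hA : IsClosed A)
    (hinv : ∀ y ∈ A, ∀ t : ℤ, shS b t y ∈ A) (hne : A.Nonempty) :
    A = Set.univ := by
  haveI : CompactSpace ↥(Xeta b) :=
    isCompact_iff_compactSpace.mp ((isClosed_closure (s := {y : ℤ → Bool | ∃ n : ℤ, y = fun m => etaB b (m + n)})).isCompact)
  have himg : IsClosed (Subtype.val '' A) :=
    (hA.isCompact.image continuous_subtype_val).isClosed
  have hsub : Subtype.val '' A ⊆ Xeta b := by
    rintro x ⟨y, hy, rfl⟩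
    exact y.2
  have hinv' : ∀ x ∈ Subtype.val '' A, ∀ t : ℤ, sh t x ∈ Subtype.val '' A := by
    rintro x ⟨y, hy, rfl⟩ t
    exact ⟨shS b t y, hinv y hy t, rfl⟩
  rcases hne with ⟨y0, hy0⟩
  have hXA := minimality H himg hsub hinv' ⟨↑y0, ⟨y0, hy0, rfl⟩⟩
  ext y
  simp only [Set.mem_univ, iff_true]
  obtain ⟨y', hy', he⟩ := hXA y.2
  have : y' = y := Subtype.ext he
  rwa [← this]

-- closedness of Van-sets on the subtype
lemma isClosed_VanSet (i : ℕ) (d : ℤ) :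
    IsClosed {y : ↥(Xeta b) | Van b (↑y) i d} := by
  have : {y : ↥(Xeta b) | Van b (↑y) i d} =
      ⋂ (n : ℤ), {y : ↥(Xeta b) | MM b i ∣ n - d → (↑y : ℤ → Bool) n = false} := by
    ext y
    simp [Van, Set.mem_iInter]
  rw [this]
  apply isClosed_iInter
  intro n
  by_cases hd : MM b i ∣ n - d
  · have he : {y : ↥(Xeta b) | MM b i ∣ n - d → (↑y : ℤ → Bool) n = false} =
        (fun y : ↥(Xeta b) => (↑y : ℤ → Bool) n) ⁻¹' {false} := by
      ext y; simp [hd]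
    rw [he]
    exact IsClosed.preimage ((continuous_apply n).comp continuous_subtype_val)
      (isClosed_discrete _)
  · have he : {y : ↥(Xeta b) | MM b i ∣ n - d → (↑y : ℤ → Bool) n = false} = Set.univ := by
      ext y; simp [hd]
    rw [he]
    exact isClosed_univ

-- closedness of the "class difference equals c" sets
lemma closed_clsrel (H : Hyp b) (U : ↥(Xeta b) → ↥(Xeta b)) (hU : Continuous U)
    {i : ℕ} (hi : 1 ≤ i) (c : ℤ) :
    IsClosed {y : ↥(Xeta b) | MM b i ∣ (R b ↑(U y) i - R b ↑y i - c)} := by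
  have hMpos : 0 < MM b i := H.MMpos hi
  have hset : {y : ↥(Xeta b) | MM b i ∣ (R b ↑(U y) i - R b ↑y i - c)} =
      ⋃ d ∈ Finset.range (MM b i).toNat,
        ({y : ↥(Xeta b) | Van b (↑y) i (d : ℤ)} ∩
         {y : ↥(Xeta b) | Van b (↑(U y)) i ((d : ℤ) + c)}) := by
    ext y
    simp only [Set.mem_setOf_eq, Set.mem_iUnion, Set.mem_inter_iff, exists_prop]
    constructor
    · intro hy
      set d0 : ℤ := (R b ↑y i) % (MM b i) with hd0
      have h1 : 0 ≤ d0 := Int.emod_nonneg _ (by omega)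
      have h2 : d0 < MM b i := Int.emod_lt_of_pos _ hMpos
      refine ⟨d0.toNat, ?_, ?_, ?_⟩
      · rw [Finset.mem_range]; omega
      · have hcast : (d0.toNat : ℤ) = d0 := Int.toNat_of_nonneg h1
        rw [hcast]
        apply Van_congr (Van_R H y.2 hi)
        have : d0 - R b ↑y i = -(R b ↑y i - R b ↑y i % MM b i) := by rw [hd0]; ring
        rw [this]
        exact (Int.dvd_self_sub_of_emod_eq rfl).neg_right
      · have hcast : (d0.toNat : ℤ) = d0 := Int.toNat_of_nonneg h1
        rw [hcast]
        apply Van_congr (Van_R H (U y).2 hi)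
        have h3 : MM b i ∣ R b ↑y i - d0 := by
          have : R b ↑y i - d0 = R b ↑y i - R b ↑y i % MM b i := by rw [hd0]
          rw [this]
          exact Int.dvd_self_sub_of_emod_eq rfl
        have he : d0 + c - R b ↑(U y) i =
            (R b ↑y i - d0) * (-1) + (-(R b ↑(U y) i - R b ↑y i - c)) := by ring
        rw [he]
        exact ((h3.mul_right _).add (hy.neg_right))
    · rintro ⟨d, _, hv1, hv2⟩
      have h1 : MM b i ∣ R b ↑y i - (d:ℤ) := R_congr H y.2 hi hv1
      have h2 : MM b i ∣ R b ↑(U y) i - ((d:ℤ) + c) := R_congr H (U y).2 hi hv2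
      have he : R b ↑(U y) i - R b ↑y i - c =
          (R b ↑(U y) i - ((d:ℤ) + c)) - (R b ↑y i - (d:ℤ)) := by ring
      rw [he]
      exact h2.sub h1
  rw [hset]
  apply Set.Finite.isClosed_biUnion (Finset.finite_toSet _)
  intro d _
  exact (isClosed_VanSet i (d:ℤ)).inter
    ((isClosed_VanSet i ((d:ℤ)+c)).preimage hU)

-- if the preimage fiber data admits a doubleton target, extract exceptional data at the source
lemma keystep (H : Hyp b) {U : ↥(Xeta b) → ↥(Xeta b)}
    (hsurj : Function.Surjective U) {ahat : ℕ → ℤ}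
    (hcls : ∀ i : ℕ, 1 ≤ i → ∀ y : ↥(Xeta b),
      MM b i ∣ (R b ↑(U y) i - R b ↑y i - ahat i))
    (e : ℕ → ℤ)
    (h2' : ∀ i : ℕ, 1 ≤ i → (2:ℤ)^i ∣ (0 - e i))
    (hb' : ∀ i : ℕ, 1 ≤ i → ¬ ((b i:ℤ) ∣ (0 - e i))) :
    ∃ m : ℤ, ∀ i : ℕ, 1 ≤ i →
      ((2:ℤ)^i ∣ m - (e i - ahat i) ∧ ¬ ((b i:ℤ) ∣ m - (e i - ahat i))) := by
  obtain ⟨hxm, hxV, hxv⟩ := D1 H e 0 h2' hb' true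
  obtain ⟨hym, hyV, hyv⟩ := D1 H e 0 h2' hb' false
  obtain ⟨x', hx'⟩ := hsurj ⟨xPt b e 0 true, hxm⟩
  obtain ⟨y', hy'⟩ := hsurj ⟨xPt b e 0 false, hym⟩
  have hne' : (↑x' : ℤ → Bool) ≠ (↑y' : ℤ → Bool) := by
    intro h
    have hxy : x' = y' := Subtype.ext h
    rw [hxy, hy'] at hx'
    have h0 : xPt b e 0 false 0 = xPt b e 0 true 0 :=
      congrFun (congrArg Subtype.val hx') 0
    rw [hxv, hyv] at h0
    exact Bool.false_ne_true h0
  have hclsx : ∀ i : ℕ, 1 ≤ i → MM b i ∣ (R b ↑x' i - (e i - ahat i)) := by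
    intro i hi
    have h1 := hcls i hi x'
    have h2 : MM b i ∣ (R b ↑(U x') i - e i) := by
      rw [hx']
      exact R_congr H hxm hi (hxV i hi)
    have he : R b ↑x' i - (e i - ahat i) =
        (R b ↑(U x') i - e i) - (R b ↑(U x') i - R b ↑x' i - ahat i) := by ring
    rw [he]
    exact h2.sub h1
  have hclsy : ∀ i : ℕ, 1 ≤ i → MM b i ∣ (R b ↑y' i - (e i - ahat i)) := by
    intro i hi
    have h1 := hcls i hi y'
    have h2 : MM b i ∣ (R b ↑(U y') i - e i) := by
      rw [hy']
      exact R_congr H hym hi (hyV i hi)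
    have he : R b ↑y' i - (e i - ahat i) =
        (R b ↑(U y') i - e i) - (R b ↑(U y') i - R b ↑y' i - ahat i) := by ring
    rw [he]
    exact h2.sub h1
  have hcleq : ∀ i : ℕ, 1 ≤ i → MM b i ∣ (R b ↑x' i - R b ↑y' i) := by
    intro i hi
    have he : R b ↑x' i - R b ↑y' i =
        (R b ↑x' i - (e i - ahat i)) - (R b ↑y' i - (e i - ahat i)) := by ring
    rw [he]
    exact (hclsx i hi).sub (hclsy i hi)
  obtain ⟨m, hm⟩ := D2 H x'.2 y'.2 hne' hcleq
  refine ⟨m, fun i hi => ?_⟩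
  obtain ⟨hm2, hmb⟩ := hm i hi
  have hMx := hclsx i hi
  constructor
  · have he : m - (e i - ahat i) = (m - R b ↑x' i) + (R b ↑x' i - (e i - ahat i)) := by ring
    rw [he]
    exact hm2.add ((dvd_mul_right _ _).trans hMx)
  · intro hcon
    apply hmb
    have he : m - R b ↑x' i = (m - (e i - ahat i)) - (R b ↑x' i - (e i - ahat i)) := by ring
    rw [he]
    exact hcon.sub ((dvd_mul_left _ _).trans hMx)

-- fibers over integer translates of the origin are singletons
lemma single_fiber (H : Hyp b) {t : ℤ} {z : ℤ → Bool} (hz : z ∈ Xeta b)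
    (hcl : ∀ i : ℕ, 1 ≤ i → MM b i ∣ (R b z i + t)) : z = sh t (etaB b) := by
  by_contra hne
  have hst : sh t (etaB b) ∈ Xeta b := sh_mem eta_mem t
  have hcl2 : ∀ i : ℕ, 1 ≤ i → MM b i ∣ (R b z i - R b (sh t (etaB b)) i) := by
    intro i hi
    have h2 : MM b i ∣ (R b (sh t (etaB b)) i - (0 - t)) :=
      R_congr H hst hi (Van_sh (Van_eta hi) t)
    have he : R b z i - R b (sh t (etaB b)) i =
        (R b z i + t) - (R b (sh t (etaB b)) i - (0 - t)) := by ring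
    rw [he]
    exact (hcl i hi).sub h2
  obtain ⟨m, hm⟩ := D2 H hz hst hne hcl2
  have hmz : ∀ i : ℕ, 1 ≤ i → (2:ℤ)^i ∣ (m + t) := by
    intro i hi
    have h1 := (hm i hi).1
    have h2 : (2:ℤ)^i ∣ (R b z i + t) := (dvd_mul_right _ _).trans (hcl i hi)
    have he : m + t = (m - R b z i) + (R b z i + t) := by ring
    rw [he]
    exact h1.add h2
  have hmt : m + t = 0 := pow2_eq hmz
  apply (hm 1 le_rfl).2
  have h2 : ((b 1:ℤ)) ∣ (R b z 1 + t) := (dvd_mul_left _ _).trans (hcl 1 le_rfl)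
  have he : m - R b z 1 = -(R b z 1 + t) := by omega
  rw [he]
  exact h2.neg_right

end Coal

theorem Xeta_coalescent (b : ℕ → ℕ)
    (hodd : ∀ i : ℕ, 1 ≤ i → Odd (b i))
    (hgt : ∀ i : ℕ, 1 ≤ i → 1 < b i)
    (hcop : ∀ i j : ℕ, 1 ≤ i → 1 ≤ j → i ≠ j → Nat.Coprime (b i) (b j))
    (U : ↥(Xeta b) → ↥(Xeta b)) (hUcont : Continuous U)
    (hcomm : ∀ y z : ↥(Xeta b),
      (z : ℤ → Bool) = (fun m => (y : ℤ → Bool) (m + 1)) →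
        ((U z : ℤ → Bool)) = fun m => (U y : ℤ → Bool) (m + 1)) :
    ∃ V : ↥(Xeta b) ≃ₜ ↥(Xeta b), ∀ y : ↥(Xeta b), V y = U y := by
  classical
  have H : Coal.Hyp b := ⟨hodd, hgt, hcop⟩
  haveI : CompactSpace ↥(Xeta b) :=
    isCompact_iff_compactSpace.mp
      ((isClosed_closure
        (s := {y : ℤ → Bool | ∃ n : ℤ, y = fun m => etaB b (m + n)})).isCompact)
  -- shift algebra on the subtype
  have shS_add : ∀ (s t : ℤ) (y : ↥(Xeta b)),
      Coal.shS b s (Coal.shS b t y) = Coal.shS b (s + t) y := by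
    intro s t y
    exact Subtype.ext (Coal.sh_sh s t ↑y)
  have shS_zero : ∀ y : ↥(Xeta b), Coal.shS b 0 y = y := fun y =>
    Subtype.ext (Coal.sh_zero ↑y)
  -- commutation of U with all shifts
  have hcomm1 : ∀ y : ↥(Xeta b), U (Coal.shS b 1 y) = Coal.shS b 1 (U y) := by
    intro y
    apply Subtype.ext
    have h := hcomm y (Coal.shS b 1 y) rfl
    rw [h]
    rfl
  have hcommm1 : ∀ y : ↥(Xeta b), U (Coal.shS b (-1) y) = Coal.shS b (-1) (U y) := by
    intro y
    have h1 := hcomm1 (Coal.shS b (-1) y)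
    have h2 : Coal.shS b 1 (Coal.shS b (-1) y) = y := by
      rw [shS_add]; norm_num; exact shS_zero y
    rw [h2] at h1
    have h3 := congrArg (Coal.shS b (-1)) h1
    rw [shS_add] at h3
    norm_num at h3
    rw [shS_zero] at h3
    exact h3.symm
  have hcommZ : ∀ (t : ℤ) (y : ↥(Xeta b)), U (Coal.shS b t y) = Coal.shS b t (U y) := by
    intro t
    induction t using Int.induction_on with
    | zero => intro y; rw [shS_zero, shS_zero]
    | succ n ih =>
      intro y
      have h1 : ((n:ℤ) + 1) = 1 + (n:ℤ) := by ring
      rw [h1, ← shS_add 1 (n:ℤ) y, hcomm1, ih, shS_add]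
    | pred n ih =>
      intro y
      have h1 : (-(n:ℤ) - 1) = (-1) + (-(n:ℤ)) := by ring
      rw [h1, ← shS_add (-1) (-(n:ℤ)) y, hcommm1, ih, shS_add]
  -- class displacement is constant
  set eca : ↥(Xeta b) := ⟨etaB b, Coal.eta_mem⟩ with heca
  set ahat : ℕ → ℤ := fun i => Coal.R b ↑(U eca) i - Coal.R b (etaB b) i with hahat
  have hcls : ∀ i : ℕ, 1 ≤ i → ∀ y : ↥(Xeta b),
      Coal.MM b i ∣ (Coal.R b ↑(U y) i - Coal.R b ↑y i - ahat i) := by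
    intro i hi
    have hclosed := Coal.closed_clsrel H U hUcont hi (ahat i)
    have hinv : ∀ y ∈ {y : ↥(Xeta b) |
        Coal.MM b i ∣ (Coal.R b ↑(U y) i - Coal.R b ↑y i - ahat i)}, ∀ t : ℤ,
        Coal.shS b t y ∈ {y : ↥(Xeta b) |
        Coal.MM b i ∣ (Coal.R b ↑(U y) i - Coal.R b ↑y i - ahat i)} := by
      intro y hy t
      have e1 : Coal.MM b i ∣ Coal.R b ↑(Coal.shS b t (U y)) i - (Coal.R b ↑(U y) i - t) :=
        Coal.R_congr H (Coal.shS b t (U y)).2 hi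
          (Coal.Van_sh (Coal.Van_R H (U y).2 hi) t)
      have e2 : Coal.MM b i ∣ Coal.R b ↑(Coal.shS b t y) i - (Coal.R b ↑y i - t) :=
        Coal.R_congr H (Coal.shS b t y).2 hi
          (Coal.Van_sh (Coal.Van_R H y.2 hi) t)
      show Coal.MM b i ∣ _
      rw [hcommZ t y]
      have hy' : Coal.MM b i ∣ (Coal.R b ↑(U y) i - Coal.R b ↑y i - ahat i) := hy
      have he : Coal.R b ↑(Coal.shS b t (U y)) i - Coal.R b ↑(Coal.shS b t y) i - ahat i =
          (Coal.R b ↑(Coal.shS b t (U y)) i - (Coal.R b ↑(U y) i - t))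
          - (Coal.R b ↑(Coal.shS b t y) i - (Coal.R b ↑y i - t))
          + (Coal.R b ↑(U y) i - Coal.R b ↑y i - ahat i) := by ring
      rw [he]
      exact (e1.sub e2).add hy'
    have hne : ({y : ↥(Xeta b) |
        Coal.MM b i ∣ (Coal.R b ↑(U y) i - Coal.R b ↑y i - ahat i)}).Nonempty := by
      refine ⟨eca, ?_⟩
      have hz0 : Coal.R b ↑(U eca) i - Coal.R b (etaB b) i
          - (Coal.R b ↑(U eca) i - Coal.R b (etaB b) i) = 0 := by ring
      show Coal.MM b i ∣ (Coal.R b ↑(U eca) i - Coal.R b (etaB b) i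
          - (Coal.R b ↑(U eca) i - Coal.R b (etaB b) i))
      rw [hz0]
      exact dvd_zero _
    have huniv := Coal.minS H hclosed hinv hne
    intro y
    have : y ∈ (Set.univ : Set ↥(Xeta b)) := Set.mem_univ y
    rw [← huniv] at this
    exact this
  -- surjectivity
  have hsurj : Function.Surjective U := by
    have hclosed : IsClosed (Set.range U) := (isCompact_range hUcont).isClosed
    have hinv : ∀ y ∈ Set.range U, ∀ t : ℤ, Coal.shS b t y ∈ Set.range U := by
      rintro _ ⟨z, rfl⟩ t
      exact ⟨Coal.shS b t z, hcommZ t z⟩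
    have huniv := Coal.minS H hclosed hinv ⟨U eca, ⟨eca, rfl⟩⟩
    intro y
    have : y ∈ (Set.univ : Set ↥(Xeta b)) := Set.mem_univ y
    rw [← huniv] at this
    exact this
  -- step (i) : 2-adic part of the displacement is an integer
  have hstep1 := Coal.keystep H hsurj hcls (fun i => 2^i)
    (fun i hi => by
      have : (0:ℤ) - 2^i = -(2^i) := by ring
      rw [this]
      exact (dvd_refl _).neg_right)
    (fun i hi hd => by
      have : (0:ℤ) - 2^i = -(2^i) := by ring
      rw [this] at hd
      exact H.not_bdvd_pow2 hi i (dvd_neg.mp hd))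
  obtain ⟨m1, hm1⟩ := hstep1
  set kk : ℤ := -m1 with hkk
  have h2k : ∀ i : ℕ, 1 ≤ i → (2:ℤ)^i ∣ (ahat i - kk) := by
    intro i hi
    have h1 := (hm1 i hi).1
    have he : ahat i - kk = (m1 - (2^i - ahat i)) + 2^i := by rw [hkk]; ring
    rw [he]
    exact h1.add (dvd_refl _)
  -- step (ii) : the odd parts also match
  have hbk : ∀ i0 : ℕ, 1 ≤ i0 → ((b i0 : ℤ)) ∣ (ahat i0 - kk) := by
    intro i0 hi0
    by_contra hcon
    obtain ⟨u, v, huv⟩ := H.cop2 hi0 i0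
    set e0 : ℤ := (ahat i0 - kk) * u * 2^i0 with he0
    have he01 : (2:ℤ)^i0 ∣ e0 := ⟨(ahat i0 - kk) * u, by rw [he0]; ring⟩
    have he02 : ((b i0:ℤ)) ∣ e0 - (ahat i0 - kk) := by
      refine ⟨(ahat i0 - kk) * (-v), ?_⟩
      rw [he0]
      linear_combination (ahat i0 - kk) * huv
    set e : ℕ → ℤ := fun i => if i = i0 then e0 else 2^i with he
    have hν2 : ∀ i : ℕ, 1 ≤ i → (2:ℤ)^i ∣ (0 - e i) := by
      intro i hi
      by_cases h : i = i0
      · subst h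
        simp only [he, if_pos rfl]
        have : (0:ℤ) - e0 = -e0 := by ring
        rw [this]
        exact he01.neg_right
      · simp only [he, if_neg h]
        have : (0:ℤ) - 2^i = -(2^i) := by ring
        rw [this]
        exact (dvd_refl _).neg_right
    have hνb : ∀ i : ℕ, 1 ≤ i → ¬ ((b i:ℤ) ∣ (0 - e i)) := by
      intro i hi hd
      by_cases h : i = i0
      · subst h
        simp only [he, if_pos rfl] at hd
        have hd' : ((b i:ℤ)) ∣ e0 := by
          have : e0 = -(0 - e0) := by ring
          rw [this]
          exact (dvd_neg.mpr hd)
        apply hcon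
        have hee : ahat i - kk = e0 - (e0 - (ahat i - kk)) := by ring
        rw [hee]
        exact hd'.sub he02
      · simp only [he, if_neg h] at hd
        have : (0:ℤ) - 2^i = -(2^i) := by ring
        rw [this] at hd
        exact H.not_bdvd_pow2 hi i (dvd_neg.mp hd)
    obtain ⟨m2, hm2⟩ := Coal.keystep H hsurj hcls e hν2 hνb
    have hei2 : ∀ i : ℕ, 1 ≤ i → (2:ℤ)^i ∣ e i := by
      intro i hi
      by_cases h : i = i0
      · subst h; simp only [he, if_pos rfl]; exact he01
      · simp only [he, if_neg h]
        exact dvd_refl _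
    have hmz : ∀ i : ℕ, 1 ≤ i → (2:ℤ)^i ∣ (m2 + kk) := by
      intro i hi
      have ha := (hm2 i hi).1
      have hb2 := h2k i hi
      have hc2 := hei2 i hi
      have heq : m2 + kk = (m2 - (e i - ahat i)) - (ahat i - kk) + e i := by ring
      rw [heq]
      exact (ha.sub hb2).add hc2
    have hm20 : m2 + kk = 0 := Coal.pow2_eq hmz
    apply (hm2 i0 hi0).2
    have heq : m2 - (e i0 - ahat i0) = -(e0 - (ahat i0 - kk)) := by
      simp only [he, if_pos rfl]
      omega
    rw [heq]
    exact he02.neg_right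
  have hMk : ∀ i : ℕ, 1 ≤ i → Coal.MM b i ∣ (ahat i - kk) := fun i hi =>
    (H.dvd_MM_iff hi).mpr ⟨h2k i hi, hbk i hi⟩
  -- U composed with the shift by kk fixes the dense orbit of eta
  have hfix : ∀ t : ℤ, Coal.shS b kk (U (Coal.shS b t eca)) = Coal.shS b t eca := by
    intro t
    apply Subtype.ext
    set z : ↥(Xeta b) := Coal.shS b kk (U (Coal.shS b t eca)) with hz
    have hzc : ∀ i : ℕ, 1 ≤ i → Coal.MM b i ∣ (Coal.R b ↑z i + t) := by
      intro i hi
      have e1 : Coal.MM b i ∣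
          Coal.R b ↑z i - (Coal.R b ↑(U (Coal.shS b t eca)) i - kk) :=
        Coal.R_congr H z.2 hi
          (Coal.Van_sh (Coal.Van_R H (U (Coal.shS b t eca)).2 hi) kk)
      have e2 := hcls i hi (Coal.shS b t eca)
      have e3 : Coal.MM b i ∣ Coal.R b ↑(Coal.shS b t eca) i - (0 - t) :=
        Coal.R_congr H (Coal.shS b t eca).2 hi (Coal.Van_sh (Coal.Van_eta hi) t)
      have e4 := hMk i hi
      have heq : Coal.R b ↑z i + t =
          (Coal.R b ↑z i - (Coal.R b ↑(U (Coal.shS b t eca)) i - kk))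
          + (Coal.R b ↑(U (Coal.shS b t eca)) i - Coal.R b ↑(Coal.shS b t eca) i - ahat i)
          + (Coal.R b ↑(Coal.shS b t eca) i - (0 - t))
          + (ahat i - kk) := by ring
      rw [heq]
      exact ((e1.add e2).add e3).add e4
    have := Coal.single_fiber H z.2 hzc
    rw [this]
    rfl
  -- conclude by density and continuity
  set C : Set ↥(Xeta b) := {y | Coal.shS b kk (U y) = y} with hC
  have hCclosed : IsClosed C :=
    isClosed_eq ((Coal.shS b kk).continuous.comp hUcont) continuous_id
  set D : Set ↥(Xeta b) := Set.range (fun t : ℤ => Coal.shS b t eca) with hD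
  have hDC : D ⊆ C := by
    rintro _ ⟨t, rfl⟩
    exact hfix t
  have hDdense : closure D = Set.univ := by
    apply Coal.minS H isClosed_closure
    · intro y hy t
      have h2 : Coal.shS b t '' D ⊆ D := by
        rintro _ ⟨_, ⟨s', rfl⟩, rfl⟩
        exact ⟨t + s', (shS_add t s' eca).symm⟩
      have h3 : Coal.shS b t y ∈ Coal.shS b t '' closure D := ⟨y, hy, rfl⟩
      have h4 := image_closure_subset_closure_image (Coal.shS b t).continuous h3
      exact closure_mono h2 h4
    · exact ⟨eca, subset_closure ⟨0, shS_zero eca⟩⟩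
  have hCuniv : C = Set.univ := by
    apply Set.eq_univ_of_univ_subset
    rw [← hDdense]
    exact closure_minimal hDC hCclosed
  refine ⟨(Coal.shS b kk).symm, fun y => ?_⟩
  have hy : Coal.shS b kk (U y) = y := by
    have : y ∈ C := by rw [hCuniv]; trivial
    exact this
  have := congrArg (Coal.shS b kk).symm hy
  rw [Homeomorph.symm_apply_apply] at this
  exact this.symm ▸ rfl
end

section
/- Fix t ≥ 1 and let H_t = {s ∈ ℤ : 0 ≤ s < p_t, 2^t | s, and b_i ∤ s for all 1 ≤ i ≤ t} (the set of holes at level t). If m ∈ ℤ is such that {(s + m) mod p_t : s ∈ H_t} = H_t, then p_t | m. -/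
open scoped BigOperators

-- `pp b t = 2^t * b_1 * b_2 * \cdots * b_t`. 
def pp (b : ℕ → ℕ) (t : ℕ) : ℕ := 2 ^ t * ∏ i ∈ Finset.Icc 1 t, b i

-- The set of holes at level `t`. 
def Hset (b : ℕ → ℕ) (t : ℕ) : Set ℤ :=
  {s : ℤ | 0 ≤ s ∧ s < (pp b t : ℤ) ∧ (2 : ℤ) ^ t ∣ s ∧
    ∀ i : ℕ, 1 ≤ i → i ≤ t → ¬ ((b i : ℤ) ∣ s)}

lemma crt_aux {ι : Type*} [DecidableEq ι] (r f : ι → ℤ) :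
    ∀ (s : Finset ι), Set.Pairwise ↑s (Function.onFun IsCoprime f) →
      ∃ x : ℤ, ∀ i ∈ s, f i ∣ x - r i := by
  intro s
  induction s using Finset.induction_on with
  | empty => exact fun _ => ⟨0, fun i hi => absurd hi (Finset.notMem_empty i)⟩
  | @insert a s ha ih =>
    intro hcop
    obtain ⟨x, hx⟩ := ih (hcop.mono (by simp [Finset.subset_insert]))
    have hca : IsCoprime (f a) (∏ i ∈ s, f i) := by
      apply IsCoprime.prod_right
      intro i hi
      exact hcop (Finset.mem_insert_self a s) (Finset.mem_insert_of_mem hi)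
        (fun h => ha (h ▸ hi))
    obtain ⟨u, v, huv⟩ := hca
    refine ⟨x + (∏ i ∈ s, f i) * (v * (r a - x)), ?_⟩
    intro i hi
    rcases Finset.mem_insert.mp hi with rfl | hi
    · exact ⟨(x - r i) * u, by linear_combination (r i - x) * huv⟩
    · have h : x + (∏ i ∈ s, f i) * (v * (r a - x)) - r i =
          (x - r i) + (∏ i ∈ s, f i) * (v * (r a - x)) := by ring
      rw [h]
      exact dvd_add (hx i hi) (dvd_mul_of_dvd_left (Finset.dvd_prod_of_mem f hi) _)

theorem holes_shift_invariant_full (b : ℕ → ℕ)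
    (hodd : ∀ i : ℕ, 1 ≤ i → Odd (b i))
    (hgt : ∀ i : ℕ, 1 ≤ i → 1 < b i)
    (hcop : ∀ i j : ℕ, 1 ≤ i → 1 ≤ j → i ≠ j → Nat.Coprime (b i) (b j))
    (t : ℕ) (ht : 1 ≤ t) (m : ℤ)
    (hshift : (fun s => (s + m) % (pp b t : ℤ)) '' Hset b t = Hset b t) :
    (pp b t : ℤ) ∣ m := by
  classical
  set P : ℤ := (pp b t : ℤ) with hPdef
  have hbpos : ∀ i ∈ Finset.Icc 1 t, 0 < b i := fun i hi =>
    lt_trans one_pos (hgt i (Finset.mem_Icc.mp hi).1)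
  have hPposN : 0 < pp b t := by
    unfold pp
    exact Nat.mul_pos (pow_pos (by norm_num) t) (Finset.prod_pos hbpos)
  have hPpos : (0 : ℤ) < P := by rw [hPdef]; exact_mod_cast hPposN
  have hPfact : P = 2 ^ t * ∏ i ∈ Finset.Icc 1 t, (b i : ℤ) := by
    rw [hPdef]; unfold pp; push_cast; ring
  have h2P : (2 : ℤ) ^ t ∣ P := ⟨_, hPfact⟩
  have hbP : ∀ i : ℕ, 1 ≤ i → i ≤ t → (b i : ℤ) ∣ P := by
    intro i h1 h2
    rw [hPfact]
    exact dvd_mul_of_dvd_right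
      (Finset.dvd_prod_of_mem _ (Finset.mem_Icc.mpr ⟨h1, h2⟩)) _
  have hmod : ∀ (x d : ℤ), d ∣ P → d ∣ x - x % P := by
    intro x d hd
    exact hd.trans ⟨x / P, by rw [Int.emod_def]; ring⟩
  have hbcast : ∀ i : ℕ, 1 ≤ i → (1 : ℤ) < (b i : ℤ) := by
    intro i hi; exact_mod_cast hgt i hi
  have h2b : ∀ j : ℕ, 1 ≤ j → IsCoprime ((2 : ℤ) ^ t) ((b j : ℤ)) := by
    intro j hj
    have hnd : ¬ 2 ∣ b j := by
      have := Nat.odd_iff.mp (hodd j hj)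
      omega
    have h2 : Nat.Coprime 2 (b j) := (Nat.Prime.coprime_iff_not_dvd Nat.prime_two).mpr hnd
    have : IsCoprime ((2 : ℕ) : ℤ) ((b j : ℕ) : ℤ) := Nat.isCoprime_iff_coprime.mpr h2
    have h2' : IsCoprime ((2 : ℤ)) ((b j : ℤ)) := by exact_mod_cast this
    exact h2'.pow_left
  have hpair : Set.Pairwise ↑(Finset.Icc 1 t) (Function.onFun IsCoprime fun i => (b i : ℤ)) := by
    intro i hi j hj hij
    simp only [Finset.coe_Icc, Set.mem_Icc] at hi hj
    exact Nat.isCoprime_iff_coprime.mpr (hcop i j hi.1 hj.1 hij)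
  -- hole constructor
  have mkhole : ∀ r : ℕ → ℤ, (∀ i : ℕ, 1 ≤ i → i ≤ t → ¬ ((b i : ℤ) ∣ r i)) →
      ∃ s₀, s₀ ∈ Hset b t ∧ ∀ i : ℕ, 1 ≤ i → i ≤ t → (b i : ℤ) ∣ s₀ - r i := by
    intro r hr
    set f : ℕ → ℤ := fun i => if i = 0 then 2 ^ t else (b i : ℤ) with hf
    set r' : ℕ → ℤ := fun i => if i = 0 then 0 else r i with hr'
    have hpair' : Set.Pairwise ↑(insert 0 (Finset.Icc 1 t)) (Function.onFun IsCoprime f) := by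
      intro i hi j hj hij
      simp only [Finset.coe_insert, Set.mem_insert_iff, Finset.coe_Icc, Set.mem_Icc]
        at hi hj
      rcases hi with rfl | hi
      · rcases hj with rfl | hj
        · exact absurd rfl hij
        · have hj1 : j ≠ 0 := by omega
          simp only [Function.onFun, hf, if_pos rfl, if_neg hj1]
          exact h2b j hj.1
      · have hi1 : i ≠ 0 := by omega
        rcases hj with rfl | hj
        · simp only [Function.onFun, hf, if_pos rfl, if_neg hi1]
          exact (h2b i hi.1).symm
        · have hj1 : j ≠ 0 := by omega
          simp only [Function.onFun, hf, if_neg hi1, if_neg hj1]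
          exact Nat.isCoprime_iff_coprime.mpr (hcop i j hi.1 hj.1 hij)
    obtain ⟨x, hx⟩ := crt_aux r' f (insert 0 (Finset.Icc 1 t)) hpair'
    have hx0 : (2 : ℤ) ^ t ∣ x := by
      have := hx 0 (Finset.mem_insert_self _ _)
      simpa [hf, hr'] using this
    have hxb : ∀ i : ℕ, 1 ≤ i → i ≤ t → (b i : ℤ) ∣ x - r i := by
      intro i h1 h2
      have := hx i (Finset.mem_insert_of_mem (Finset.mem_Icc.mpr ⟨h1, h2⟩))
      have hi0 : i ≠ 0 := by omega
      simpa [hf, hr', hi0] using this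
    refine ⟨x % P, ⟨Int.emod_nonneg x (ne_of_gt hPpos), Int.emod_lt_of_pos x hPpos, ?_, ?_⟩, ?_⟩
    · have h1 := hmod x _ h2P
      have := dvd_sub hx0 h1
      simpa using this
    · intro i h1 h2 hdvd
      have hd1 : (b i : ℤ) ∣ x - x % P := hmod x _ (hbP i h1 h2)
      have hd2 : (b i : ℤ) ∣ x := by
        have := dvd_add hdvd hd1
        simpa using this
      have : (b i : ℤ) ∣ r i := by
        have := dvd_sub hd2 (hxb i h1 h2)
        simpa using this
      exact hr i h1 h2 this
    · intro i h1 h2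
      have hd1 : (b i : ℤ) ∣ x - x % P := hmod x _ (hbP i h1 h2)
      have := dvd_sub (hxb i h1 h2) hd1
      have h : x - r i - (x - x % P) = x % P - r i := by ring
      rwa [h] at this
  -- forward shift
  have fwd : ∀ s ∈ Hset b t, (s + m) % P ∈ Hset b t := by
    intro s hs
    rw [← hshift]
    exact ⟨s, hs, rfl⟩
  -- a generic hole
  have hone : ∀ i : ℕ, 1 ≤ i → i ≤ t → ¬ ((b i : ℤ) ∣ (1 : ℤ)) := by
    intro i h1 _ hd
    have := Int.le_of_dvd one_pos hd
    exact absurd this (not_le.mpr (hbcast i h1))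
  obtain ⟨s₀, hs₀H, _⟩ := mkhole (fun _ => 1) hone
  -- Step 1 : 2^t ∣ m
  have h2m : (2 : ℤ) ^ t ∣ m := by
    have h1 := (fwd s₀ hs₀H).2.2.1
    have h2 : (2 : ℤ) ^ t ∣ (s₀ + m) - (s₀ + m) % P := hmod _ _ h2P
    have h3 : (2 : ℤ) ^ t ∣ s₀ + m := by
      have := dvd_add h1 h2
      simpa using this
    have h4 : (2 : ℤ) ^ t ∣ s₀ := hs₀H.2.2.1
    have := dvd_sub h3 h4
    simpa using this
  -- Step 2 : each b i ∣ m
  have hbm : ∀ i ∈ Finset.Icc 1 t, (fun i => (b i : ℤ)) i ∣ m := by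
    intro i hi
    obtain ⟨h1, h2⟩ := Finset.mem_Icc.mp hi
    by_contra hnd
    simp only at hnd
    set r : ℕ → ℤ := fun j => if j = i then -m else 1 with hrdef
    have hrcond : ∀ j : ℕ, 1 ≤ j → j ≤ t → ¬ ((b j : ℤ) ∣ r j) := by
      intro j hj1 hj2 hd
      by_cases hji : j = i
      · subst hji
        simp only [hrdef, if_pos rfl] at hd
        exact hnd ((dvd_neg).mp hd)
      · simp only [hrdef, if_neg hji] at hd
        exact hone j hj1 hj2 hd
    obtain ⟨s₁, hs₁H, hs₁r⟩ := mkhole r hrcond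
    have hsi : (b i : ℤ) ∣ s₁ + m := by
      have := hs₁r i h1 h2
      simp only [hrdef, if_pos rfl, sub_neg_eq_add] at this
      exact this
    have hmem := fwd s₁ hs₁H
    have hdiv : (b i : ℤ) ∣ (s₁ + m) % P := by
      have hd2 : (b i : ℤ) ∣ (s₁ + m) - (s₁ + m) % P := hmod _ _ (hbP i h1 h2)
      have := dvd_sub hsi hd2
      simpa using this
    exact hmem.2.2.2 i h1 h2 hdiv
  -- Step 3 : combine
  have hprod : (∏ i ∈ Finset.Icc 1 t, (b i : ℤ)) ∣ m :=
    Finset.prod_dvd_of_coprime hpair hbm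
  have hcop2 : IsCoprime ((2 : ℤ) ^ t) (∏ i ∈ Finset.Icc 1 t, (b i : ℤ)) := by
    apply IsCoprime.prod_right
    intro i hi
    exact h2b i (Finset.mem_Icc.mp hi).1
  calc (pp b t : ℤ) = 2 ^ t * ∏ i ∈ Finset.Icc 1 t, (b i : ℤ) := hPfact
    _ ∣ m := hcop2.mul_dvd h2m hprod
end

section
/- Fix t ≥ 1 and let H_t = {s ∈ ℤ : 0 ≤ s < p_t, 2^t | s, and b_i ∤ s for all 1 ≤ i ≤ t} (the set of holes at level t). If m ∈ ℤ is such that {(s + m) mod p_t : s ∈ H_t} = H_t, then 2^t | m. -/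
open scoped BigOperators

theorem holes_shift_invariant_two_pow (b : ℕ → ℕ)
    (hodd : ∀ i : ℕ, 1 ≤ i → Odd (b i))
    (hgt : ∀ i : ℕ, 1 ≤ i → 1 < b i)
    (hcop : ∀ i j : ℕ, 1 ≤ i → 1 ≤ j → i ≠ j → Nat.Coprime (b i) (b j))
    (t : ℕ) (ht : 1 ≤ t) (m : ℤ)
    (hshift : (fun s => (s + m) % (pp b t : ℤ)) '' Hset b t = Hset b t) :
    (2 : ℤ) ^ t ∣ m := by
  set B : ℕ := ∏ i ∈ Finset.Icc 1 t, b i with hBdef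
  -- coprimality of 2^t with B
  have hcop2 : Nat.Coprime 2 B := by
    refine Nat.Coprime.prod_right fun i hi => ?_
    have hi1 : 1 ≤ i := (Finset.mem_Icc.mp hi).1
    exact Nat.coprime_two_left.mpr (hodd i hi1)
  have hcopZ : IsCoprime ((2 : ℤ) ^ t) (B : ℤ) := by
    have : IsCoprime ((2 : ℤ)) (B : ℤ) := by
      have := Nat.isCoprime_iff_coprime.mpr hcop2
      exact_mod_cast this
    exact this.pow_left
  obtain ⟨u, v, huv⟩ := hcopZ
  set P : ℤ := (pp b t : ℤ) with hPdef
  have hP : P = 2 ^ t * (B : ℤ) := by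
    simp only [hPdef, pp, hBdef]
    push_cast
    ring
  have hBpos : 0 < (B : ℤ) := by
    have : 0 < B := Finset.prod_pos fun i hi =>
      lt_trans one_pos (hgt i (Finset.mem_Icc.mp hi).1)
    exact_mod_cast this
  have hPpos : 0 < P := by
    rw [hP]; positivity
  have h2P : (2 : ℤ) ^ t ∣ P := ⟨(B : ℤ), hP⟩
  set s : ℤ := (2 ^ t * u) % P with hsdef
  have hseq : s = 2 ^ t * u - P * ((2 ^ t * u) / P) := Int.emod_def _ _
  have hs2 : (2 : ℤ) ^ t ∣ s := by
    rw [hseq]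
    exact dvd_sub (Dvd.intro u rfl) (h2P.mul_right _)
  have hs0 : 0 ≤ s := Int.emod_nonneg _ hPpos.ne'
  have hslt : s < P := Int.emod_lt_of_pos _ hPpos
  have hsH : s ∈ Hset b t := by
    refine ⟨hs0, hslt, hs2, fun i hi1 hit hbi => ?_⟩
    have hbB : (b i : ℤ) ∣ (B : ℤ) := by
      exact_mod_cast Finset.dvd_prod_of_mem b (Finset.mem_Icc.mpr ⟨hi1, hit⟩)
    have hbP : (b i : ℤ) ∣ P := hP ▸ hbB.mul_left _
    have h1 : (b i : ℤ) ∣ 2 ^ t * u := by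
      have := hbi
      rw [hseq] at this
      have := dvd_add this (hbP.mul_right ((2 ^ t * u) / P))
      simpa using this
    -- u * 2^t + v * B = 1
    have : (b i : ℤ) ∣ 1 := by
      rw [← huv]
      exact dvd_add (by rwa [mul_comm] at h1) (hbB.mul_left v)
    have := Int.le_of_dvd one_pos this
    have hb1 : (1 : ℤ) < (b i : ℤ) := by exact_mod_cast hgt i hi1
    omega
  have hmem : (s + m) % P ∈ Hset b t := by
    rw [← hshift]
    exact ⟨s, hsH, rfl⟩
  obtain ⟨_, _, h2sm, _⟩ := hmem
  have heq : (s + m) % P = s + m - P * ((s + m) / P) := Int.emod_def _ _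
  have : (2 : ℤ) ^ t ∣ s + m := by
    have := dvd_add h2sm (h2P.mul_right ((s + m) / P))
    rw [heq] at this
    simpa using this
  have := dvd_sub this hs2
  simpa using this
end

section
/- Let B ⊆ ℕ \ {1} be primitive. If the indicator function η = 1_{F_B} of the B-free integers is a Toeplitz sequence, then B is taut; that is, there exist no c ∈ ℕ and no Behrend set A ⊆ ℕ \ {1} with c·A ⊆ B. -/
-- The indicator function of the `\mathscr{B}`-free integers for a general `\mathscr{B}`. 
open Classical in
noncomputable def etaN (B : Set ℕ) : ℤ → ℕ := fun n =>
  if (∀ a ∈ B, ¬ ((a : ℤ) ∣ n)) then 1 else 0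

-- `A` is a Behrend set: the set of multiples of `A` has natural density `1`. 
open Classical in
def IsBehrend (A : Set ℕ) : Prop :=
  Filter.Tendsto
    (fun N : ℕ =>
      (((Finset.Icc 1 N).filter (fun n => ∃ a ∈ A, a ∣ n)).card : ℝ) / (N : ℝ))
    Filter.atTop (nhds 1)

theorem toeplitz_implies_taut (B : Set ℕ)
    (h2 : ∀ n ∈ B, 2 ≤ n)
    (hprim : ∀ b ∈ B, ∀ b' ∈ B, b ∣ b' → b = b')
    (htoeplitz : ∀ n : ℤ, ∃ s : ℕ, 0 < s ∧ ∀ k : ℤ, etaN B (n + k * s) = etaN B n) :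
    ¬ ∃ (c : ℕ) (A : Set ℕ), 1 ≤ c ∧ (∀ a ∈ A, 2 ≤ a) ∧ IsBehrend A ∧
      (∀ a ∈ A, c * a ∈ B) := by
  classical
  rintro ⟨c, A, hc, hA2, hBeh, hsub⟩
  -- A is nonempty (else the density would be 0, not 1)
  obtain ⟨a₀, ha₀⟩ : A.Nonempty := by
    by_contra hne
    rw [Set.not_nonempty_iff_eq_empty] at hne
    subst hne
    have h0 : Filter.Tendsto
        (fun N : ℕ =>
          (((Finset.Icc 1 N).filter (fun n => ∃ a ∈ (∅ : Set ℕ), a ∣ n)).card : ℝ) / (N : ℝ))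
        Filter.atTop (nhds 0) := by
      have : (fun N : ℕ =>
          (((Finset.Icc 1 N).filter (fun n => ∃ a ∈ (∅ : Set ℕ), a ∣ n)).card : ℝ) / (N : ℝ))
          = fun _ : ℕ => (0 : ℝ) := by
        funext N; simp
      rw [this]
      exact tendsto_const_nhds
    have := tendsto_nhds_unique h0 hBeh
    norm_num at this
  -- c itself is B-free
  have hcfree : ∀ b ∈ B, ¬ ((b : ℤ) ∣ (c : ℤ)) := by
    intro b hb hdvd
    have hbc : b ∣ c := by exact_mod_cast hdvd
    have hbca : b ∣ c * a₀ := hbc.mul_right a₀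
    have heq : b = c * a₀ := hprim b hb (c * a₀) (hsub a₀ ha₀) hbca
    have hle : c * a₀ ≤ c := Nat.le_of_dvd (by omega) (heq ▸ hbc)
    have h2a : 2 ≤ a₀ := hA2 a₀ ha₀
    nlinarith
  obtain ⟨s, hs, hper⟩ := htoeplitz (c : ℤ)
  have hetac : etaN B (c : ℤ) = 1 := by
    unfold etaN
    rw [if_pos hcfree]
  -- every integer c + k s is B-free
  have key : ∀ k : ℤ, ∀ b ∈ B, ¬ ((b : ℤ) ∣ ((c : ℤ) + k * s)) := by
    intro k b hb hdvd
    have h1 := (hper k).trans hetac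
    unfold etaN at h1
    rw [if_neg (by push_neg; exact ⟨b, hb, hdvd⟩)] at h1
    exact absurd h1 zero_ne_one
  -- no 1 + j s is a multiple of A
  have hfree : ∀ j : ℕ, ¬ ∃ a ∈ A, a ∣ (1 + j * s) := by
    rintro j ⟨a, ha, hdvd⟩
    apply key ((j : ℤ) * c) (c * a) (hsub a ha)
    have hd : (c * a : ℕ) ∣ c * (1 + j * s) := mul_dvd_mul_left c hdvd
    have hd2 : ((c * a : ℕ) : ℤ) ∣ ((c * (1 + j * s) : ℕ) : ℤ) := Int.natCast_dvd_natCast.mpr hd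
    have heq : ((c : ℤ) + (j : ℤ) * c * (s : ℤ)) = ((c * (1 + j * s) : ℕ) : ℤ) := by
      push_cast; ring
    rw [heq]
    exact hd2
  -- counting: the multiples of A in [1,N] avoid an AP of size N/s
  have hcount : ∀ N : ℕ,
      ((Finset.Icc 1 N).filter (fun n => ∃ a ∈ A, a ∣ n)).card + N / s ≤ N := by
    intro N
    set S := (Finset.Icc 1 N).filter (fun n => ∃ a ∈ A, a ∣ n) with hSdef
    set T := (Finset.range (N / s)).image (fun j => 1 + j * s) with hTdef
    have hinj : Function.Injective (fun j : ℕ => 1 + j * s) := by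
      intro j₁ j₂ h
      simp only at h
      have hms : j₁ * s = j₂ * s := by omega
      exact Nat.eq_of_mul_eq_mul_right hs hms
    have hTcard : T.card = N / s := by
      rw [hTdef, Finset.card_image_of_injective _ hinj, Finset.card_range]
    have hTsub : T ⊆ Finset.Icc 1 N := by
      intro m hm
      rw [hTdef] at hm
      simp only [Finset.mem_image, Finset.mem_range] at hm
      obtain ⟨j, hj, rfl⟩ := hm
      have hj1 : j + 1 ≤ N / s := hj
      have h1 : (j + 1) * s ≤ N :=
        le_trans (Nat.mul_le_mul_right s hj1) (Nat.div_mul_le_self N s)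
      have h2 : (j + 1) * s = j * s + s := by ring
      simp only [Finset.mem_Icc]
      omega
    have hdisj : Disjoint S T := by
      rw [Finset.disjoint_left]
      intro m hmS hmT
      rw [hSdef, Finset.mem_filter] at hmS
      rw [hTdef] at hmT
      simp only [Finset.mem_image, Finset.mem_range] at hmT
      obtain ⟨j, _, rfl⟩ := hmT
      exact hfree j hmS.2
    have hcu : (S ∪ T).card = S.card + T.card := Finset.card_union_of_disjoint hdisj
    have hle : (S ∪ T).card ≤ (Finset.Icc 1 N).card :=
      Finset.card_le_card (Finset.union_subset (Finset.filter_subset _ _) hTsub)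
    rw [hcu, hTcard, Nat.card_Icc] at hle
    omega
  -- the density bound
  have hsR : (0 : ℝ) < s := by exact_mod_cast hs
  have hbound : ∀ᶠ N : ℕ in Filter.atTop,
      (((Finset.Icc 1 N).filter (fun n => ∃ a ∈ A, a ∣ n)).card : ℝ) / (N : ℝ)
        ≤ 1 - 1 / (s : ℝ) + 1 / (N : ℝ) := by
    filter_upwards [Filter.eventually_ge_atTop 1] with N hN
    have hNpos : (0 : ℝ) < N := by exact_mod_cast hN
    have hN0 : (N : ℝ) ≠ 0 := ne_of_gt hNpos
    have hs0 : (s : ℝ) ≠ 0 := ne_of_gt hsR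
    have h1 := hcount N
    have h2 : N < s * (N / s) + s := by
      have hdm := Nat.div_add_mod N s
      have hm := Nat.mod_lt N hs
      omega
    have hc1 : (((Finset.Icc 1 N).filter (fun n => ∃ a ∈ A, a ∣ n)).card : ℝ)
        + ((N / s : ℕ) : ℝ) ≤ (N : ℝ) := by exact_mod_cast h1
    have hc2 : (N : ℝ) < (s : ℝ) * ((N / s : ℕ) : ℝ) + (s : ℝ) := by exact_mod_cast h2
    rw [div_le_iff₀ hNpos]
    have e : (1 - 1 / (s : ℝ) + 1 / (N : ℝ)) * (N : ℝ)
        = (N : ℝ) - (N : ℝ) / (s : ℝ) + 1 := by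
      field_simp
    rw [e]
    have h3 : (N : ℝ) / (s : ℝ) - 1 ≤ ((N / s : ℕ) : ℝ) := by
      rw [sub_le_iff_le_add, div_le_iff₀ hsR]
      nlinarith
    linarith
  have hg : Filter.Tendsto (fun N : ℕ => 1 - 1 / (s : ℝ) + 1 / (N : ℝ))
      Filter.atTop (nhds (1 - 1 / (s : ℝ))) := by
    have h0 : Filter.Tendsto (fun N : ℕ => 1 / (N : ℝ)) Filter.atTop (nhds 0) :=
      tendsto_one_div_atTop_nhds_zero_nat
    have := (tendsto_const_nhds (x := 1 - 1 / (s : ℝ)) (f := Filter.atTop (α := ℕ))).add h0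
    simpa using this
  have hfin : (1 : ℝ) ≤ 1 - 1 / (s : ℝ) := le_of_tendsto_of_tendsto hBeh hg hbound
  have : (0 : ℝ) < 1 / (s : ℝ) := by positivity
  linarith
end

section
/- Let B ⊆ ℕ \ {1} be primitive and nonempty, η = 1_{F_B}, and X_η the closure of the S-orbit of η in {0,1}^ℤ. The Boolean complement map ¬, defined by (¬y)(n) = 1 − y(n) for all n ∈ ℤ, is an element of the automorphism group of (X_η, S) (equivalently, ¬(X_η) ⊆ X_η) if and only if B = {2}. -/
-- The (Boolean) indicator function of the `\mathscr{B}`-free integers for a general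
--`\mathscr{B}`. 
open Classical in
noncomputable def etaFB (B : Set ℕ) : ℤ → Bool := fun n =>
  if (∀ a ∈ B, ¬ ((a : ℤ) ∣ n)) then true else false

-- The orbit closure `X_η` of `η` under the left shift, in the product topology
--on `{0,1}^ℤ`. 
def XetaFB (B : Set ℕ) : Set (ℤ → Bool) :=
  closure {y : ℤ → Bool | ∃ n : ℤ, y = fun m => etaFB B (m + n)}

lemma etaFB_true_iff (B : Set ℕ) (n : ℤ) :
    etaFB B n = true ↔ ∀ a ∈ B, ¬ ((a : ℤ) ∣ n) := by
  unfold etaFB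
  split <;> simp_all

lemma etaFB_false_iff (B : Set ℕ) (n : ℤ) :
    etaFB B n = false ↔ ∃ a ∈ B, ((a : ℤ) ∣ n) := by
  unfold etaFB
  split <;> simp_all

lemma eta_mem (B : Set ℕ) : etaFB B ∈ XetaFB B :=
  subset_closure ⟨0, by funext m; rw [add_zero]⟩

lemma window_lemma (B : Set ℕ)
    (h : (fun n => ! etaFB B n) ∈ XetaFB B) (W : Finset ℤ) :
    ∃ n : ℤ, ∀ j ∈ W, etaFB B (j + n) = ! etaFB B j := by
  have hU : IsOpen {y : ℤ → Bool | ∀ j ∈ W, y j = ! etaFB B j} := by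
    have hEq : {y : ℤ → Bool | ∀ j ∈ W, y j = ! etaFB B j}
        = ⋂ j ∈ W, {y : ℤ → Bool | y j = ! etaFB B j} := by
      ext y; simp
    rw [hEq]
    refine isOpen_biInter_finset fun j _ => ?_
    have : {y : ℤ → Bool | y j = ! etaFB B j}
        = (fun y : ℤ → Bool => y j) ⁻¹' ({! etaFB B j} : Set Bool) := by
      ext y; simp
    rw [this]
    exact (isOpen_discrete _).preimage (continuous_apply j)
  have hmem : (fun n => ! etaFB B n) ∈ {y : ℤ → Bool | ∀ j ∈ W, y j = ! etaFB B j} :=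
    fun j _ => rfl
  obtain ⟨z, hz1, hz2⟩ := mem_closure_iff.mp h _ hU hmem
  obtain ⟨n, rfl⟩ := hz2
  exact ⟨n, fun j hj => hz1 j hj⟩

theorem boolean_complement_automorphism_iff (B : Set ℕ) (hne : B.Nonempty)
    (h2 : ∀ n ∈ B, 2 ≤ n)
    (hprim : ∀ b ∈ B, ∀ b' ∈ B, b ∣ b' → b = b') :
    (∀ y ∈ XetaFB B, (fun n => ! y n) ∈ XetaFB B) ↔ B = {2} := by
  constructor
  · intro hc
    have hcompl : (fun n => ! etaFB B n) ∈ XetaFB B := hc _ (eta_mem B)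
    -- Step 1: 2 ∈ B
    have h2B : (2 : ℕ) ∈ B := by
      by_contra h2B
      have h1free : etaFB B 1 = true := by
        rw [etaFB_true_iff]
        intro a ha hdvd
        have hd : a ∣ 1 := by exact_mod_cast hdvd
        have := Nat.le_of_dvd one_pos hd
        have := h2 a ha
        omega
      have h2free : etaFB B 2 = true := by
        rw [etaFB_true_iff]
        intro a ha hdvd
        have hd : a ∣ 2 := by exact_mod_cast hdvd
        have hle := Nat.le_of_dvd two_pos hd
        have hge := h2 a ha
        have : a = 2 := by omega
        exact h2B (this ▸ ha)
      obtain ⟨n, hn⟩ := window_lemma B hcompl {1, 2}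
      have e1 : etaFB B (1 + n) = false := by
        have := hn 1 (by simp); rw [h1free] at this; simpa using this
      have e2 : etaFB B (2 + n) = false := by
        have := hn 2 (by simp); rw [h2free] at this; simpa using this
      obtain ⟨c, hcB, hcdvd⟩ := (etaFB_false_iff B _).mp e1
      obtain ⟨d, hdB, hddvd⟩ := (etaFB_false_iff B _).mp e2
      have hcop : Nat.Coprime c d := by
        have hg1 : ((Nat.gcd c d : ℤ)) ∣ (1 + n) :=
          dvd_trans (by exact_mod_cast Nat.gcd_dvd_left c d) hcdvd
        have hg2 : ((Nat.gcd c d : ℤ)) ∣ (2 + n) :=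
          dvd_trans (by exact_mod_cast Nat.gcd_dvd_right c d) hddvd
        have hg : ((Nat.gcd c d : ℤ)) ∣ 1 := by
          have := dvd_sub hg2 hg1
          simpa using this
        have : Nat.gcd c d ∣ 1 := by exact_mod_cast hg
        exact Nat.dvd_one.mp this
      -- window of multiples of c of length d
      obtain ⟨n', hn'⟩ := window_lemma B hcompl
        ((Finset.range d).image (fun k : ℕ => (k : ℤ) * (c : ℤ)))
      obtain ⟨u, v, huv⟩ : IsCoprime (c : ℤ) (d : ℤ) :=
        Nat.isCoprime_iff_coprime.mpr hcop
      have hd2 : 2 ≤ d := h2 d hdB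
      have hdpos : (0 : ℤ) < (d : ℤ) := by exact_mod_cast (by omega : 0 < d)
      set kZ : ℤ := (-n' * u) % (d : ℤ) with hkZ
      have hk0 : 0 ≤ kZ := Int.emod_nonneg _ (ne_of_gt hdpos)
      have hklt : kZ < (d : ℤ) := Int.emod_lt_of_pos _ hdpos
      have hq : kZ = -n' * u - (d : ℤ) * ((-n' * u) / (d : ℤ)) := Int.emod_def _ _
      have hdvd2 : (d : ℤ) ∣ (kZ * c + n') := by
        refine ⟨n' * v - ((-n' * u) / (d : ℤ)) * c, ?_⟩
        rw [hq]; linear_combination (-n') * huv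
      set k : ℕ := kZ.toNat with hkdef
      have hkc : ((k : ℤ)) = kZ := Int.toNat_of_nonneg hk0
      have hkltd : k < d := by
        have : ((k : ℤ)) < (d : ℤ) := by rw [hkc]; exact hklt
        exact_mod_cast this
      have hmemW : ((k : ℤ) * (c : ℤ)) ∈
          ((Finset.range d).image (fun k : ℕ => (k : ℤ) * (c : ℤ))) :=
        Finset.mem_image.mpr ⟨k, Finset.mem_range.mpr hkltd, rfl⟩
      have h_nonfree : etaFB B ((k : ℤ) * (c : ℤ)) = false :=
        (etaFB_false_iff B _).mpr ⟨c, hcB, dvd_mul_left _ _⟩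
      have htrue : etaFB B ((k : ℤ) * (c : ℤ) + n') = true := by
        have := hn' _ hmemW
        rw [h_nonfree] at this; simpa using this
      have := (etaFB_true_iff B _).mp htrue d hdB
      apply this
      rw [hkc]
      exact hdvd2
    -- Step 2: B = {2}
    ext x
    simp only [Set.mem_singleton_iff]
    refine ⟨fun hx => ?_, fun hx => hx ▸ h2B⟩
    by_contra hx2
    have hodd : ¬ (2 ∣ x) := fun hdd => hx2 ((hprim 2 h2B x hx hdd)).symm
    have hxodd : (2 : ℤ) ∣ ((x : ℤ) + 1) := by
      have : 2 ∣ (x + 1) := by omega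
      exact_mod_cast this
    obtain ⟨n, hn⟩ := window_lemma B hcompl {(x : ℤ), (x : ℤ) + 1}
    have ex1 : etaFB B ((x : ℤ)) = false :=
      (etaFB_false_iff B _).mpr ⟨x, hx, dvd_refl _⟩
    have ex2 : etaFB B ((x : ℤ) + 1) = false :=
      (etaFB_false_iff B _).mpr ⟨2, h2B, hxodd⟩
    have t1 : etaFB B ((x : ℤ) + n) = true := by
      have := hn (x : ℤ) (by simp); rw [ex1] at this; simpa using this
    have t2 : etaFB B ((x : ℤ) + 1 + n) = true := by
      have := hn ((x : ℤ) + 1) (by simp); rw [ex2] at this; simpa using this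
    have nd1 : ¬ ((2 : ℤ) ∣ ((x : ℤ) + n)) := by
      have := (etaFB_true_iff B _).mp t1 2 h2B
      exact_mod_cast this
    have nd2 : ¬ ((2 : ℤ) ∣ ((x : ℤ) + 1 + n)) := by
      have := (etaFB_true_iff B _).mp t2 2 h2B
      exact_mod_cast this
    omega
  · intro hB
    subst hB
    intro y hy
    have key : ∀ kk : ℤ, (! etaFB {2} kk) = etaFB {2} (kk + 1) := by
      intro kk
      rcases Int.even_or_odd kk with ⟨m, hm⟩ | ⟨m, hm⟩
      · have hkf : etaFB {2} kk = false :=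
          (etaFB_false_iff _ _).mpr ⟨2, rfl, ⟨m, by omega⟩⟩
        have hkt : etaFB {2} (kk + 1) = true := by
          rw [etaFB_true_iff]
          intro a ha hdvd
          rw [Set.mem_singleton_iff] at ha
          subst ha
          obtain ⟨t, ht⟩ := hdvd
          omega
        rw [hkf, hkt]; rfl
      · have hkt : etaFB {2} kk = true := by
          rw [etaFB_true_iff]
          intro a ha hdvd
          rw [Set.mem_singleton_iff] at ha
          subst ha
          obtain ⟨t, ht⟩ := hdvd
          omega
        have hkf : etaFB {2} (kk + 1) = false :=
          (etaFB_false_iff _ _).mpr ⟨2, rfl, ⟨m + 1, by omega⟩⟩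
        rw [hkf, hkt]; rfl
    have hOsub : (fun z : ℤ → Bool => fun n => ! z n) ''
        {y : ℤ → Bool | ∃ n : ℤ, y = fun m => etaFB {2} (m + n)} ⊆
        {y : ℤ → Bool | ∃ n : ℤ, y = fun m => etaFB {2} (m + n)} := by
      rintro _ ⟨z, ⟨n, rfl⟩, rfl⟩
      refine ⟨n + 1, ?_⟩
      funext m
      show (! etaFB {2} (m + n)) = etaFB {2} (m + (n + 1))
      rw [key (m + n), add_assoc]
    have hcont : Continuous (fun z : ℤ → Bool => fun n => ! z n) :=
      continuous_pi fun n =>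
        (continuous_of_discreteTopology (f := Bool.not)).comp (continuous_apply n)
    exact closure_minimal (hOsub.trans subset_closure) isClosed_closure
      (image_closure_subset_closure_image hcont ⟨y, hy, rfl⟩)
end

section
/- If n ∈ ℤ satisfies η(n) = 1, and n = 2^a m with a ≥ 0 and m odd, then n ∈ Per_{p_{a+1}}(η): for all ℓ ∈ ℤ, η(n + p_{a+1} ℓ) = 1. -/
open scoped BigOperators

-- The indicator function of the `\mathscr{B}`-free integers for
--`\mathscr{B} = {2^i b_i : i \ge 1}`. 
open Classical in
noncomputable def eta (b : ℕ → ℕ) : ℤ → ℕ := fun n =>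
  if (∀ i : ℕ, 1 ≤ i → ¬ ((2 : ℤ) ^ i * (b i : ℤ) ∣ n)) then 1 else 0

-- `Per x s` is the set of `s`-periodic positions of `x`. 
def Per (x : ℤ → ℕ) (s : ℕ) : Set ℤ := {n : ℤ | ∀ k : ℤ, x (n + k * s) = x n}

theorem eta_one_periodic (b : ℕ → ℕ)
    (hodd : ∀ i : ℕ, 1 ≤ i → Odd (b i))
    (hgt : ∀ i : ℕ, 1 ≤ i → 1 < b i)
    (hcop : ∀ i j : ℕ, 1 ≤ i → 1 ≤ j → i ≠ j → Nat.Coprime (b i) (b j))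
    (n : ℤ) (hn : eta b n = 1) (a : ℕ) (m : ℤ) (hm : Odd m)
    (hnm : n = 2 ^ a * m) :
    ∀ ℓ : ℤ, eta b (n + (pp b (a + 1) : ℤ) * ℓ) = 1 := by
  have H : ∀ i : ℕ, 1 ≤ i → ¬ ((2 : ℤ) ^ i * (b i : ℤ) ∣ n) := by
    by_contra h
    simp only [eta, if_neg h] at hn
    exact absurd hn (by norm_num)
  intro ℓ
  simp only [eta]
  rw [if_pos]
  intro i hi hdvd
  have hppl : (2 : ℤ) ^ (a + 1) ∣ (pp b (a + 1) : ℤ) * ℓ := by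
    refine Dvd.dvd.mul_right ?_ ℓ
    have : (2 : ℕ) ^ (a + 1) ∣ pp b (a + 1) := ⟨_, rfl⟩
    exact_mod_cast Int.natCast_dvd_natCast.mpr this
  rcases le_or_gt i (a + 1) with hle | hlt
  · -- 2^i * b i divides pp b (a+1)
    have hdvd_pp : (2 : ℤ) ^ i * (b i : ℤ) ∣ (pp b (a + 1) : ℤ) := by
      have h1 : (2 : ℤ) ^ i ∣ (2 : ℤ) ^ (a + 1) := pow_dvd_pow 2 hle
      have h2 : (b i : ℤ) ∣ (∏ j ∈ Finset.Icc 1 (a + 1), (b j : ℤ)) := by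
        exact Finset.dvd_prod_of_mem _ (Finset.mem_Icc.mpr ⟨hi, hle⟩)
      have := mul_dvd_mul h1 h2
      simpa [pp, Nat.cast_prod] using this
    have hdn : (2 : ℤ) ^ i * (b i : ℤ) ∣ n := by
      have h3 : (2 : ℤ) ^ i * (b i : ℤ) ∣ (pp b (a + 1) : ℤ) * ℓ :=
        hdvd_pp.mul_right ℓ
      have := dvd_sub hdvd h3
      simpa using this
    exact H i hi hdn
  · -- 2^(a+1) divides 2^i * b i, hence divides n, hence 2 ∣ m
    have h1 : (2 : ℤ) ^ (a + 1) ∣ (2 : ℤ) ^ i * (b i : ℤ) :=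
      (pow_dvd_pow 2 hlt.le).mul_right _
    have h2 : (2 : ℤ) ^ (a + 1) ∣ n + (pp b (a + 1) : ℤ) * ℓ := h1.trans hdvd
    have h3 : (2 : ℤ) ^ (a + 1) ∣ n := by
      have := dvd_sub h2 hppl
      simpa using this
    rw [hnm, pow_succ] at h3
    have h4 : (2 : ℤ) ∣ m := by
      rcases h3 with ⟨c, hc⟩
      refine ⟨c, ?_⟩
      have h2a : ((2 : ℤ) ^ a) ≠ 0 := by positivity
      have : (2 : ℤ) ^ a * m = (2 : ℤ) ^ a * (2 * c) := by ring_nf; ring_nf at hc; linarith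
      exact mul_left_cancel₀ h2a this
    exact (Int.not_even_iff_odd.mpr hm) (even_iff_two_dvd.mpr h4)
end
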